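/- arXiv:2307.16658 — 3 statements merged into one kernel-verified Lean document; each statement's English description precedes it below -/
import Mathlib

section
/- For a sequence z : ℕ → Matrix (Fin 2) (Fin 2) ℤ with values in {L, N}, let π(z) ∈ [0,1] denote the unique point of ⋂_{t≥0} f_{L·(z 0 ⋯ z (t−1))·L⁻¹}([0,1]). Then: for every x ∈ [0,1] there are at most two sequences z with π(z) = x; if x ∈ [0,1] is irrational, or x ∈ {0,1}, there is exactly one such sequence; and if x is rational with 0 < x < 1 there are exactly two such sequences. -/
/-- `L = [[1,0],[1,1]]`. -/
def Lmat : Matrix (Fin 2) (Fin 2) ℤ := !![1, 0; 1, 1]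

/-- `N = [[1,1],[0,1]]`. -/
def Nmat : Matrix (Fin 2) (Fin 2) ℤ := !![1, 1; 0, 1]

/-- `L⁻¹ = [[1,0],[-1,1]]`. -/
def Linv : Matrix (Fin 2) (Fin 2) ℤ := !![1, 0; -1, 1]

/-- The Möbius action of an integer matrix `[[a,b],[c,d]]` on `ℝ`: `x ↦ (ax+b)/(cx+d)`. -/
noncomputable def mobius (M : Matrix (Fin 2) (Fin 2) ℤ) (x : ℝ) : ℝ :=
  ((M 0 0 : ℝ) * x + (M 0 1 : ℝ)) / ((M 1 0 : ℝ) * x + (M 1 1 : ℝ))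

/-- `M_t = L ⬝ (z 0 ⬝ z 1 ⬝ ⋯ ⬝ z (t-1)) ⬝ L⁻¹`. -/
def conjWordProd (z : ℕ → Matrix (Fin 2) (Fin 2) ℤ) (t : ℕ) : Matrix (Fin 2) (Fin 2) ℤ :=
  Lmat * ((List.range t).map z).prod * Linv

/-- The set of `{L,N}`-valued sequences `z` with `π(z) = x`, where `π(z)` is the unique
point of `⋂ t, f_{L (z 0 ⋯ z (t-1)) L⁻¹}([0,1])`; since that intersection is a singleton,
`π(z) = x` is expressed by `x` belonging to every term of the chain. -/
def piFiber (x : ℝ) : Set (ℕ → Matrix (Fin 2) (Fin 2) ℤ) :=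
  {z | (∀ t, z t = Lmat ∨ z t = Nmat) ∧
       ∀ t : ℕ, x ∈ mobius (conjWordProd z t) '' Set.Icc (0 : ℝ) 1}

open Set
open scoped Classical

namespace SternB

def Bmat : Matrix (Fin 2) (Fin 2) ℤ := !![0, 1; -1, 2]

def Good (M : Matrix (Fin 2) (Fin 2) ℤ) : Prop :=
  0 < M 1 1 ∧ 0 < M 1 0 + M 1 1 ∧ M 0 0 * M 1 1 - M 0 1 * M 1 0 = 1 ∧
  0 ≤ M 0 1 ∧ M 0 1 ≤ M 1 1 ∧ 0 ≤ M 0 0 + M 0 1 ∧ M 0 0 + M 0 1 ≤ M 1 0 + M 1 1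

noncomputable def lep (M : Matrix (Fin 2) (Fin 2) ℤ) : ℝ := (M 0 1 : ℝ) / (M 1 1 : ℝ)
noncomputable def rep (M : Matrix (Fin 2) (Fin 2) ℤ) : ℝ :=
  ((M 0 0 + M 0 1 : ℤ) : ℝ) / ((M 1 0 + M 1 1 : ℤ) : ℝ)
noncomputable def med (M : Matrix (Fin 2) (Fin 2) ℤ) : ℝ :=
  ((M 0 0 + 2 * M 0 1 : ℤ) : ℝ) / ((M 1 0 + 2 * M 1 1 : ℤ) : ℝ)

lemma mulL_eq (M : Matrix (Fin 2) (Fin 2) ℤ) :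
    M * Lmat = !![M 0 0 + M 0 1, M 0 1; M 1 0 + M 1 1, M 1 1] := by
  rw [Matrix.eta_fin_two M, Lmat, Matrix.mul_fin_two]; norm_num

lemma mulB_eq (M : Matrix (Fin 2) (Fin 2) ℤ) :
    M * Bmat = !![-(M 0 1), M 0 0 + 2*M 0 1; -(M 1 1), M 1 0 + 2*M 1 1] := by
  rw [Matrix.eta_fin_two M, Bmat, Matrix.mul_fin_two]; norm_num; ring_nf; simp

lemma one_entries : (1 : Matrix (Fin 2) (Fin 2) ℤ) = !![1,0;0,1] := by
  rw [Matrix.eta_fin_two 1]; norm_num [Matrix.one_apply]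

lemma good_one : Good 1 := by rw [one_entries]; norm_num [Good]

lemma good_mulL {M : Matrix (Fin 2) (Fin 2) ℤ} (hM : Good M) : Good (M * Lmat) := by
  obtain ⟨h1, h2, h3, h4, h5, h6, h7⟩ := hM
  rw [mulL_eq]
  refine ⟨by simpa using h1, ?_, ?_, by simpa using h4, ?_, ?_, ?_⟩ <;> simp <;> nlinarith

lemma good_mulB {M : Matrix (Fin 2) (Fin 2) ℤ} (hM : Good M) : Good (M * Bmat) := by
  obtain ⟨h1, h2, h3, h4, h5, h6, h7⟩ := hM
  rw [mulB_eq]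
  refine ⟨?_, ?_, ?_, ?_, ?_, ?_, ?_⟩ <;> simp <;> nlinarith

lemma lep_mulL (M : Matrix (Fin 2) (Fin 2) ℤ) : lep (M * Lmat) = lep M := by
  rw [mulL_eq]; simp [lep]

lemma rep_mulL (M : Matrix (Fin 2) (Fin 2) ℤ) : rep (M * Lmat) = med M := by
  rw [mulL_eq]; simp [rep, med]; norm_num; ring_nf

lemma lep_mulB (M : Matrix (Fin 2) (Fin 2) ℤ) : lep (M * Bmat) = med M := by
  rw [mulB_eq]; simp [lep, med]

lemma rep_mulB (M : Matrix (Fin 2) (Fin 2) ℤ) : rep (M * Bmat) = rep M := by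
  rw [mulB_eq]; simp [rep]; norm_num; ring_nf


lemma mobius_image (a b c d x : ℝ) (hd : 0 < d) (hcd : 0 < c + d) (hdet : a*d - b*c = 1) :
    (∃ w ∈ Icc (0:ℝ) 1, (a*w+b)/(c*w+d) = x) ↔ b/d ≤ x ∧ x ≤ (a+b)/(c+d) := by
  constructor
  · rintro ⟨w, ⟨hw0, hw1⟩, rfl⟩
    have hden : 0 < c*w + d := by nlinarith [mul_nonneg hw0 hcd.le, mul_nonneg (by linarith : (0:ℝ) ≤ 1-w) hd.le]
    constructor
    · rw [div_le_div_iff₀ hd hden]; nlinarith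
    · rw [div_le_div_iff₀ hden hcd]; nlinarith
  · rintro ⟨h1, h2⟩
    have hay : 0 < a - c*x := by
      rcases le_or_gt c 0 with hc | hc
      · have hle : c * x ≤ c * (b/d) := by
          rcases lt_or_eq_of_le h1 with h | h
          · rcases eq_or_lt_of_le hc with rfl | hc'
            · simp
            · exact le_of_lt ((mul_lt_mul_left_of_neg hc').mpr h)
          · rw [← h]
        have h3 : 0 < a - c*(b/d) := by
          have he : a - c*(b/d) = (a*d - b*c)/d := by field_simp
          rw [he, hdet]; positivity
        linarith
      · have hle : c * x ≤ c * ((a+b)/(c+d)) := mul_le_mul_of_nonneg_left h2 (le_of_lt hc)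
        have h3 : 0 < a - c*((a+b)/(c+d)) := by
          have he : a - c*((a+b)/(c+d)) = (a*d - b*c)/(c+d) := by field_simp; ring
          rw [he, hdet]; positivity
        linarith
    refine ⟨(d*x - b)/(a - c*x), ⟨by
        apply div_nonneg _ (le_of_lt hay)
        rw [div_le_iff₀ hd] at h1; linarith, by
        rw [div_le_one hay]
        rw [le_div_iff₀ hcd] at h2; linarith⟩, ?_⟩
    have hne : a - c*x ≠ 0 := ne_of_gt hay
    have hne2 : a - x*c ≠ 0 := by rw [mul_comm]; exact hne
    have hden2 : c * ((d*x-b)/(a-c*x)) + d = 1/(a-c*x) := by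
      field_simp
      linear_combination hdet
    have hnum2 : a * ((d*x-b)/(a-c*x)) + b = x/(a-c*x) := by
      field_simp
      linear_combination x * hdet
    rw [hden2, hnum2]
    field_simp

section
variable {M : Matrix (Fin 2) (Fin 2) ℤ}

lemma q_pos (hM : Good M) : (0:ℝ) < (M 1 1 : ℝ) := by exact_mod_cast hM.1
lemma s_pos (hM : Good M) : (0:ℝ) < ((M 1 0 + M 1 1 : ℤ) : ℝ) := by exact_mod_cast hM.2.1
lemma m_pos (hM : Good M) : (0:ℝ) < ((M 1 0 + 2 * M 1 1 : ℤ) : ℝ) := by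
  have h1 := hM.1; have h2 := hM.2.1; exact_mod_cast (by linarith : (0:ℤ) < M 1 0 + 2 * M 1 1)

lemma mem_image_iff (hM : Good M) (x : ℝ) :
    x ∈ mobius M '' Icc (0:ℝ) 1 ↔ lep M ≤ x ∧ x ≤ rep M := by
  have hdet : (M 0 0 : ℝ) * (M 1 1) - (M 0 1) * (M 1 0) = 1 := by exact_mod_cast hM.2.2.1
  have := mobius_image (M 0 0 : ℝ) (M 0 1) (M 1 0) (M 1 1) x (q_pos hM)
      (by have := s_pos hM; push_cast at this ⊢; linarith) hdet
  unfold lep rep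
  simp only [Set.mem_image, mobius]
  push_cast
  push_cast at this
  exact this

lemma lep_lt_med (hM : Good M) : lep M < med M := by
  obtain ⟨h1, h2, h3, h4, h5, h6, h7⟩ := hM
  unfold lep med
  rw [div_lt_div_iff₀ (by exact_mod_cast h1) (by exact_mod_cast (by linarith : (0:ℤ) < M 1 0 + 2 * M 1 1))]
  have : M 0 1 * (M 1 0 + 2 * M 1 1) < (M 0 0 + 2 * M 0 1) * M 1 1 := by nlinarith
  exact_mod_cast this

lemma med_lt_rep (hM : Good M) : med M < rep M := by
  obtain ⟨h1, h2, h3, h4, h5, h6, h7⟩ := hM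
  unfold med rep
  rw [div_lt_div_iff₀ (by exact_mod_cast (by linarith : (0:ℤ) < M 1 0 + 2 * M 1 1)) (by exact_mod_cast h2)]
  have : (M 0 0 + 2 * M 0 1) * (M 1 0 + M 1 1) < (M 0 0 + M 0 1) * (M 1 0 + 2 * M 1 1) := by nlinarith
  exact_mod_cast this

lemma lep_nonneg (hM : Good M) : 0 ≤ lep M := by
  unfold lep
  apply div_nonneg _ (q_pos hM).le
  exact_mod_cast hM.2.2.2.1

lemma rep_le_one (hM : Good M) : rep M ≤ 1 := by
  unfold rep
  rw [div_le_one (s_pos hM)]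
  exact_mod_cast hM.2.2.2.2.2.2

lemma med_pos (hM : Good M) : 0 < med M := lt_of_le_of_lt (lep_nonneg hM) (lep_lt_med hM)
lemma med_lt_one (hM : Good M) : med M < 1 := lt_of_lt_of_le (med_lt_rep hM) (rep_le_one hM)

lemma med_not_irrational (M : Matrix (Fin 2) (Fin 2) ℤ) : ¬ Irrational (med M) := by
  intro h
  apply h
  refine ⟨((M 0 0 + 2 * M 0 1 : ℤ) : ℚ) / ((M 1 0 + 2 * M 1 1 : ℤ) : ℚ), ?_⟩
  unfold med
  push_cast
  ring
end

lemma LinvL : Linv * Lmat = 1 := by decide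
lemma LL_conj : Lmat * Lmat * Linv = Lmat := by decide
lemma LN_conj : Lmat * Nmat * Linv = Bmat := by decide
lemma L_ne_N : Lmat ≠ Nmat := by decide
lemma conj_zero (z : ℕ → Matrix (Fin 2) (Fin 2) ℤ) : conjWordProd z 0 = 1 := by
  simp [conjWordProd]; decide

lemma conj_succ (z : ℕ → Matrix (Fin 2) (Fin 2) ℤ) (t : ℕ) :
    conjWordProd z (t+1) = conjWordProd z t * (Lmat * z t * Linv) := by
  have hcancel : ∀ w : Matrix (Fin 2) (Fin 2) ℤ, Linv * (Lmat * w) = w := by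
    intro w; rw [← Matrix.mul_assoc, LinvL, one_mul]
  simp [conjWordProd, List.range_succ, Matrix.mul_assoc, hcancel]

lemma conj_succ_L {z : ℕ → Matrix (Fin 2) (Fin 2) ℤ} {t : ℕ} (h : z t = Lmat) :
    conjWordProd z (t+1) = conjWordProd z t * Lmat := by
  rw [conj_succ, h, LL_conj]

lemma conj_succ_N {z : ℕ → Matrix (Fin 2) (Fin 2) ℤ} {t : ℕ} (h : z t = Nmat) :
    conjWordProd z (t+1) = conjWordProd z t * Bmat := by
  rw [conj_succ, h, LN_conj]

lemma conj_congr {z z' : ℕ → Matrix (Fin 2) (Fin 2) ℤ} {t : ℕ}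
    (h : ∀ s < t, z s = z' s) : conjWordProd z t = conjWordProd z' t := by
  unfold conjWordProd
  have : (List.range t).map z = (List.range t).map z' :=
    List.map_congr_left (fun s hs => h s (List.mem_range.mp hs))
  rw [this]

lemma good_conj {z : ℕ → Matrix (Fin 2) (Fin 2) ℤ}
    (hz : ∀ t, z t = Lmat ∨ z t = Nmat) : ∀ t, Good (conjWordProd z t) := by
  intro t
  induction t with
  | zero => rw [conj_zero]; exact good_one
  | succ t ih =>
    rcases hz t with h | h
    · rw [conj_succ_L h]; exact good_mulL ih
    · rw [conj_succ_N h]; exact good_mulB ih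

noncomputable def cnd (x : ℝ) (tb : Bool) (M : Matrix (Fin 2) (Fin 2) ℤ) : Prop :=
  if tb then x ≤ med M else x < med M

lemma cnd_imp_le {x tb M} (h : cnd x tb M) : x ≤ med M := by
  cases tb <;> simp [cnd] at h <;> [exact h.le; exact h]

lemma not_cnd_imp_ge {x tb M} (h : ¬ cnd x tb M) : med M ≤ x := by
  cases tb <;> simp [cnd] at h <;> [exact h; exact h.le]

noncomputable def Mg (x : ℝ) (tb : Bool) : ℕ → Matrix (Fin 2) (Fin 2) ℤ
  | 0 => 1
  | t+1 => if cnd x tb (Mg x tb t) then Mg x tb t * Lmat else Mg x tb t * Bmat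

noncomputable def zg (x : ℝ) (tb : Bool) (t : ℕ) : Matrix (Fin 2) (Fin 2) ℤ :=
  if cnd x tb (Mg x tb t) then Lmat else Nmat

lemma good_Mg (x tb) : ∀ t, Good (Mg x tb t) := by
  intro t
  induction t with
  | zero => exact good_one
  | succ t ih =>
    rw [Mg]
    split
    · exact good_mulL ih
    · exact good_mulB ih

lemma zg_vals (x tb) : ∀ t, zg x tb t = Lmat ∨ zg x tb t = Nmat := by
  intro t; unfold zg; split <;> simp

lemma conj_zg (x tb) : ∀ t, conjWordProd (zg x tb) t = Mg x tb t := by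
  intro t
  induction t with
  | zero => rw [conj_zero]; rfl
  | succ t ih =>
    by_cases h : cnd x tb (Mg x tb t)
    · rw [conj_succ_L (show zg x tb t = Lmat by rw [zg, if_pos h]), ih, Mg, if_pos h]
    · rw [conj_succ_N (show zg x tb t = Nmat by rw [zg, if_neg h]), ih, Mg, if_neg h]

lemma lep_one : lep 1 = 0 := by rw [one_entries]; simp [lep]
lemma rep_one : rep 1 = 1 := by rw [one_entries]; simp [rep]

lemma Mg_mem {x : ℝ} (hx : x ∈ Icc (0:ℝ) 1) (tb) :
    ∀ t, lep (Mg x tb t) ≤ x ∧ x ≤ rep (Mg x tb t) := by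
  intro t
  induction t with
  | zero => simpa [Mg, lep_one, rep_one] using hx
  | succ t ih =>
    rw [Mg]
    by_cases h : cnd x tb (Mg x tb t)
    · rw [if_pos h, lep_mulL, rep_mulL]
      exact ⟨ih.1, cnd_imp_le h⟩
    · rw [if_neg h, lep_mulB, rep_mulB]
      exact ⟨not_cnd_imp_ge h, ih.2⟩

lemma zg_mem_fiber {x : ℝ} (hx : x ∈ Icc (0:ℝ) 1) (tb) : zg x tb ∈ piFiber x := by
  refine ⟨zg_vals x tb, fun t => ?_⟩
  rw [conj_zg, mem_image_iff (good_Mg x tb t)]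
  exact Mg_mem hx tb t

section Rigid
variable {x : ℝ} {z : ℕ → Matrix (Fin 2) (Fin 2) ℤ}
  (hzv : ∀ t, z t = Lmat ∨ z t = Nmat)
  (hint : ∀ t, lep (conjWordProd z t) ≤ x ∧ x ≤ rep (conjWordProd z t))

include hzv hint

lemma forced_L {t : ℕ} (h : x < med (conjWordProd z t)) : z t = Lmat := by
  rcases hzv t with hL | hN
  · exact hL
  · exfalso
    have h1 := (hint (t+1)).1
    rw [conj_succ_N hN, lep_mulB] at h1
    linarith

lemma forced_N {t : ℕ} (h : med (conjWordProd z t) < x) : z t = Nmat := by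
  rcases hzv t with hL | hN
  · exfalso
    have h1 := (hint (t+1)).2
    rw [conj_succ_L hL, rep_mulL] at h1
    linarith
  · exact hN

lemma rigid_right {t : ℕ} (h : x = rep (conjWordProd z t)) :
    ∀ s, t ≤ s → x = rep (conjWordProd z s) := by
  intro s hs
  induction s, hs using Nat.le_induction with
  | base => exact h
  | succ s _ ih =>
    have hmed : med (conjWordProd z s) < x := by
      rw [ih]; exact med_lt_rep (good_conj hzv s)
    rw [conj_succ_N (forced_N hzv hint hmed), rep_mulB]
    exact ih

lemma rigid_left {t : ℕ} (h : x = lep (conjWordProd z t)) :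
    ∀ s, t ≤ s → x = lep (conjWordProd z s) := by
  intro s hs
  induction s, hs using Nat.le_induction with
  | base => exact h
  | succ s _ ih =>
    have hmed : x < med (conjWordProd z s) := by
      rw [ih]; exact lep_lt_med (good_conj hzv s)
    rw [conj_succ_L (forced_L hzv hint hmed), lep_mulL]
    exact ih

end Rigid

theorem classify {x : ℝ} {z : ℕ → Matrix (Fin 2) (Fin 2) ℤ} (hz : z ∈ piFiber x) :
    z = zg x true ∨ z = zg x false := by
  obtain ⟨hzv, hzm⟩ := hz
  have hgood : ∀ t, Good (conjWordProd z t) := good_conj hzv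
  have hint : ∀ t, lep (conjWordProd z t) ≤ x ∧ x ≤ rep (conjWordProd z t) :=
    fun t => (mem_image_iff (hgood t) x).mp (hzm t)
  by_cases hall : ∀ t, z t = zg x true t
  · left; funext t; exact hall t
  · right
    have hex : ∃ t, ¬ z t = zg x true t := by push_neg at hall; exact hall
    set t₀ := Nat.find hex with ht₀def
    have ht₀ : z t₀ ≠ zg x true t₀ := Nat.find_spec hex
    have hpre : ∀ s < t₀, z s = zg x true s := fun s hs => not_not.mp (Nat.find_min hex hs)
    have hWpre : ∀ s, s ≤ t₀ → conjWordProd z s = Mg x true s := by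
      intro s hs
      rw [← conj_zg x true s]
      exact conj_congr (fun s' hs' => hpre s' (lt_of_lt_of_le hs' hs))
    have hMt : conjWordProd z t₀ = Mg x true t₀ := hWpre t₀ le_rfl
    have hkey : x = med (conjWordProd z t₀) ∧ z t₀ = Nmat := by
      by_cases hc : cnd x true (Mg x true t₀)
      · have hzt : z t₀ = Nmat := by
          rcases hzv t₀ with h | h
          · exact absurd (by rw [h, zg, if_pos hc]) ht₀
          · exact h
        have h1 := (hint (t₀+1)).1
        rw [conj_succ_N hzt, lep_mulB] at h1
        have h2 := cnd_imp_le hc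
        rw [← hMt] at h2
        exact ⟨le_antisymm h2 h1, hzt⟩
      · exfalso
        have hlt : med (conjWordProd z t₀) < x := by
          simp only [cnd, if_pos] at hc
          rw [hMt]
          exact lt_of_not_ge hc
        have := forced_N hzv hint hlt
        exact ht₀ (by rw [this, zg, if_neg hc])
    obtain ⟨hmed, hzt0⟩ := hkey
    have hnotie : ∀ s < t₀, x ≠ med (conjWordProd z s) := by
      intro s hs heq
      have hzs : z s = Lmat := by
        rw [hpre s hs, zg, if_pos]
        show cnd x true (Mg x true s)
        simp only [cnd, if_pos]
        rw [← hWpre s hs.le, ← heq]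
      have hr : x = rep (conjWordProd z (s+1)) := by
        rw [conj_succ_L hzs, rep_mulL]; exact heq
      have hrt := rigid_right hzv hint hr t₀ hs
      have hlt := med_lt_rep (hgood t₀)
      rw [← hmed, ← hrt] at hlt
      exact lt_irrefl x hlt
    have hlep : ∀ s, t₀ + 1 ≤ s → x = lep (conjWordProd z s) := by
      apply rigid_left hzv hint
      rw [conj_succ_N hzt0, lep_mulB]; exact hmed
    have hchoice : ∀ s, (cnd x false (conjWordProd z s) → z s = Lmat) ∧
        (¬ cnd x false (conjWordProd z s) → z s = Nmat) := by
      intro s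
      constructor
      · intro h
        apply forced_L hzv hint
        simpa [cnd] using h
      · intro h
        have hge : med (conjWordProd z s) ≤ x := not_cnd_imp_ge h
        rcases lt_or_eq_of_le hge with hlt | heq
        · exact forced_N hzv hint hlt
        · rcases lt_trichotomy s t₀ with h1 | rfl | h1
          · exact absurd heq.symm (hnotie s h1)
          · exact hzt0
          · exfalso
            have h3 := hlep s h1
            have h2 := lep_lt_med (hgood s)
            rw [← h3] at h2
            rw [← heq] at h2
            exact lt_irrefl _ h2
    have hMfalse : ∀ s, Mg x false s = conjWordProd z s := by
      intro s
      induction s with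
      | zero => rw [conj_zero]; rfl
      | succ s ih =>
        rw [Mg, ih]
        by_cases h : cnd x false (conjWordProd z s)
        · rw [if_pos h, ← conj_succ_L ((hchoice s).1 h)]
        · rw [if_neg h, ← conj_succ_N ((hchoice s).2 h)]
    funext s
    rw [zg, hMfalse s]
    by_cases h : cnd x false (conjWordProd z s)
    · rw [if_pos h, (hchoice s).1 h]
    · rw [if_neg h, (hchoice s).2 h]

lemma cnd_iff_of_ne {x : ℝ} {M : Matrix (Fin 2) (Fin 2) ℤ} (h : x ≠ med M) :
    cnd x true M ↔ cnd x false M := by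
  simp only [cnd, if_pos, if_neg]
  exact ⟨fun hle => lt_of_le_of_ne hle h, le_of_lt⟩

lemma zg_eq_of_no_tie {x : ℝ} (h : ∀ t, x ≠ med (Mg x true t)) : zg x true = zg x false := by
  have hM : ∀ t, Mg x true t = Mg x false t := by
    intro t
    induction t with
    | zero => rfl
    | succ t ih =>
      rw [Mg, Mg, ← ih]
      by_cases hc : cnd x true (Mg x true t)
      · rw [if_pos hc, if_pos ((cnd_iff_of_ne (h t)).mp hc)]
      · rw [if_neg hc, if_neg (fun hc' => hc ((cnd_iff_of_ne (h t)).mpr hc'))]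
  funext t
  rw [zg, zg, ← hM t]
  by_cases hc : cnd x true (Mg x true t)
  · rw [if_pos hc, if_pos ((cnd_iff_of_ne (h t)).mp hc)]
  · rw [if_neg hc, if_neg (fun hc' => hc ((cnd_iff_of_ne (h t)).mpr hc'))]

lemma tie_exists {x : ℝ} (h0 : 0 < x) (h1 : x < 1) (hrat : ¬ Irrational x) :
    ∃ t, x = med (Mg x true t) := by
  by_contra hno
  push_neg at hno
  have hstrict : ∀ t, lep (Mg x true t) < x ∧ x < rep (Mg x true t) := by
    intro t
    induction t with
    | zero => simpa [Mg, lep_one, rep_one] using ⟨h0, h1⟩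
    | succ t ih =>
      rw [Mg]
      by_cases hc : cnd x true (Mg x true t)
      · rw [if_pos hc, lep_mulL, rep_mulL]
        exact ⟨ih.1, lt_of_le_of_ne (cnd_imp_le hc) (hno (t))⟩
      · rw [if_neg hc, lep_mulB, rep_mulB]
        exact ⟨lt_of_le_of_ne (not_cnd_imp_ge hc) (fun h => hno t h.symm), ih.2⟩
  obtain ⟨ρ, hρ⟩ : ∃ ρ : ℚ, (ρ:ℝ) = x := not_not.mp hrat
  obtain ⟨u₀, v₀, hv₀, hxeq⟩ : ∃ u₀ v₀ : ℤ, 0 < v₀ ∧ x = (u₀ : ℝ)/(v₀ : ℝ) := by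
    refine ⟨ρ.num, (ρ.den : ℤ), by exact_mod_cast ρ.pos, ?_⟩
    rw [← hρ, Rat.cast_def]; push_cast; rfl
  have hv₀' : (0:ℝ) < (v₀ : ℝ) := by exact_mod_cast hv₀
  have hk1 : ∀ t, 1 ≤ u₀ * (Mg x true t) 1 1 - (Mg x true t) 0 1 * v₀ := by
    intro t
    have h := (hstrict t).1
    have hg := good_Mg x true t
    set M := Mg x true t with hMdef
    rw [lep, hxeq, div_lt_div_iff₀ (q_pos hg) hv₀'] at h
    have : M 0 1 * v₀ < u₀ * M 1 1 := by exact_mod_cast h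
    omega
  have hk2 : ∀ t, 1 ≤ ((Mg x true t) 0 0 + (Mg x true t) 0 1) * v₀
      - u₀ * ((Mg x true t) 1 0 + (Mg x true t) 1 1) := by
    intro t
    have h := (hstrict t).2
    have hg := good_Mg x true t
    set M := Mg x true t with hMdef
    rw [rep, hxeq, div_lt_div_iff₀ hv₀' (s_pos hg)] at h
    have : u₀ * (M 1 0 + M 1 1) < (M 0 0 + M 0 1) * v₀ := by
      have h' : (u₀:ℝ) * ((M 1 0 : ℝ) + M 1 1) < ((M 0 0 : ℝ) + M 0 1) * v₀ := by
        push_cast at h; linarith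
      exact_mod_cast h'
    omega
  set K : ℕ → ℤ := fun t =>
    (u₀ * (Mg x true t) 1 1 - (Mg x true t) 0 1 * v₀)
    + (((Mg x true t) 0 0 + (Mg x true t) 0 1) * v₀
       - u₀ * ((Mg x true t) 1 0 + (Mg x true t) 1 1)) with hKdef
  have hK2 : ∀ t, 2 ≤ K t := by
    intro t
    have := hk1 t
    have := hk2 t
    rw [hKdef]
    dsimp only
    omega
  have hstep : ∀ t, K (t+1) ≤ K t - 1 := by
    intro t
    have h1 := hk1 t
    have h2 := hk2 t
    rw [hKdef]
    dsimp only
    rw [Mg]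
    by_cases hc : cnd x true (Mg x true t)
    · rw [if_pos hc, mulL_eq]
      simp
      linarith
    · rw [if_neg hc, mulB_eq]
      simp
      linarith
  have hdesc : ∀ t : ℕ, K t + t ≤ K 0 := by
    intro t
    induction t with
    | zero => simp
    | succ t ih =>
      have := hstep t
      push_cast
      push_cast at ih
      linarith
  have hT := hdesc (K 0).toNat
  rw [Int.toNat_of_nonneg (by linarith [hK2 0])] at hT
  linarith [hK2 (K 0).toNat]

lemma two_fibers {x : ℝ} (h0 : 0 < x) (h1 : x < 1) (hrat : ¬ Irrational x) :
    zg x true ≠ zg x false ∧ piFiber x = {zg x true, zg x false} := by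
  have htie := tie_exists h0 h1 hrat
  set t₁ := Nat.find htie with ht₁def
  have htie₁ : x = med (Mg x true t₁) := Nat.find_spec htie
  have hnotie : ∀ s < t₁, x ≠ med (Mg x true s) := fun s hs => Nat.find_min htie hs
  have hMeq : ∀ s, s ≤ t₁ → Mg x true s = Mg x false s := by
    intro s
    induction s with
    | zero => intro _; rfl
    | succ s ih =>
      intro hs
      have hs' : s < t₁ := hs
      rw [Mg, Mg, ← ih hs'.le]
      by_cases hc : cnd x true (Mg x true s)
      · rw [if_pos hc, if_pos ((cnd_iff_of_ne (hnotie s hs')).mp hc)]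
      · rw [if_neg hc, if_neg (fun hc' => hc ((cnd_iff_of_ne (hnotie s hs')).mpr hc'))]
  have hne : zg x true ≠ zg x false := by
    intro heq
    have h1' : zg x true t₁ = Lmat := by
      rw [zg, if_pos]
      show cnd x true (Mg x true t₁)
      simp only [cnd, if_pos]
      exact le_of_eq htie₁
    have h2' : zg x false t₁ = Nmat := by
      rw [zg, if_neg]
      rw [← hMeq t₁ le_rfl]
      simp only [cnd]
      simp only [Bool.false_eq_true, if_false]
      rw [← htie₁]
      exact lt_irrefl x
    rw [heq, h2'] at h1'
    exact L_ne_N h1'.symm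
  refine ⟨hne, ?_⟩
  have hx : x ∈ Icc (0:ℝ) 1 := ⟨h0.le, h1.le⟩
  ext z
  constructor
  · intro hz
    rcases classify hz with h | h
    · exact Or.inl h
    · exact Or.inr h
  · rintro (rfl | rfl)
    · exact zg_mem_fiber hx true
    · exact zg_mem_fiber hx false

lemma no_tie_of_special {x : ℝ} (h : Irrational x ∨ x = 0 ∨ x = 1) :
    ∀ t, x ≠ med (Mg x true t) := by
  intro t heq
  rcases h with hirr | rfl | rfl
  · exact med_not_irrational (Mg x true t) (heq ▸ hirr)
  · exact (ne_of_lt (med_pos (good_Mg 0 true t))) heq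
  · exact (ne_of_gt (med_lt_one (good_Mg 1 true t))) heq

end SternB


/-- Every `x ∈ [0,1]` has at most two `π`-preimages; irrational points and the endpoints
`0, 1` have exactly one; rational points strictly between `0` and `1` have exactly two. -/
theorem piFiber_card :
    (∀ x ∈ Set.Icc (0 : ℝ) 1, ∃ z₁ z₂, ∀ z ∈ piFiber x, z = z₁ ∨ z = z₂) ∧
    (∀ x ∈ Set.Icc (0 : ℝ) 1, (Irrational x ∨ x = 0 ∨ x = 1) → ∃! z, z ∈ piFiber x) ∧
    (∀ x : ℝ, 0 < x → x < 1 → ¬Irrational x →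
      ∃ z₁ z₂, z₁ ≠ z₂ ∧ piFiber x = {z₁, z₂}) := by
  refine ⟨?_, ?_, ?_⟩
  · intro x _
    exact ⟨SternB.zg x true, SternB.zg x false, fun z hz => SternB.classify hz⟩
  · intro x hx hcase
    refine ⟨SternB.zg x true, SternB.zg_mem_fiber hx true, ?_⟩
    intro z hz
    rcases SternB.classify hz with h | h
    · exact h
    · rw [h, ← SternB.zg_eq_of_no_tie (SternB.no_tie_of_special hcase)]
  · intro x h0 h1 hrat
    obtain ⟨hne, hset⟩ := SternB.two_fibers h0 h1 hrat
    exact ⟨SternB.zg x true, SternB.zg x false, hne, hset⟩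
end

section
/- Let τ = (1+√5)/2 and let T be the (τ−1)-continued fraction map, T(x) = |1/x| − ⌊|1/x| + 2 − τ⌋, defined for irrational x in [τ−2, τ−1] \ {0}. Let ω ∈ [τ−2, τ−1] be a quadratic irrational. Then ω is purely periodic under T (i.e. T^[p](ω) = ω for some integer p ≥ 1) if and only if its Galois conjugate ω' satisfies ω' ≤ −2. -/
set_option maxHeartbeats 1000000

/-- The golden ratio `τ = (1 + √5)/2`. -/
noncomputable def goldenRatio' : ℝ := (1 + Real.sqrt 5) / 2

/-- The `(τ-1)`-continued fraction map `T(x) = |1/x| - ⌊|1/x| + 2 - τ⌋` on irrationals in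
`[τ-2, τ-1]`, extended by `0` at the remaining points. -/
noncomputable def alphaCFMap (x : ℝ) : ℝ :=
  open Classical in
  if Irrational x ∧ x ∈ Set.Icc (goldenRatio' - 2) (goldenRatio' - 1) then
    |1 / x| - (⌊|1 / x| + 2 - goldenRatio'⌋ : ℤ)
  else 0

namespace AlphaCF

local notation "gr" => goldenRatio'

lemma s5 : Real.sqrt 5 ^ 2 = 5 := Real.sq_sqrt (by norm_num)
lemma gr_lb : (1.6:ℝ) < gr := by
  have h := s5; have h2 := Real.sqrt_nonneg 5; unfold goldenRatio'; nlinarith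
lemma gr_ub : gr < (1.7:ℝ) := by
  have h := s5; have h2 := Real.sqrt_nonneg 5; unfold goldenRatio'; nlinarith
lemma gr_sq : gr ^ 2 = gr + 1 := by
  have h := s5; unfold goldenRatio'; nlinarith

lemma irr_linear {u : ℝ} (hu : Irrational u) {p q : ℤ} (h : (p:ℝ) * u + q = 0) :
    p = 0 ∧ q = 0 := by
  by_cases hp : p = 0
  · refine ⟨hp, ?_⟩
    subst hp; simp at h; exact_mod_cast h
  · exfalso
    have hpr : (p:ℝ) ≠ 0 := Int.cast_ne_zero.mpr hp
    have : u = ((-q : ℚ)/(p:ℚ) : ℚ) := by push_cast; field_simp; linarith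
    exact hu ⟨_, this.symm⟩

lemma Tstep {x : ℝ} (hx : Irrational x) (hm : x ∈ Set.Icc (gr - 2) (gr - 1)) :
    ∃ ε k : ℤ, (ε = 1 ∨ ε = -1) ∧ 2 ≤ k ∧ (ε = -1 → 3 ≤ k) ∧
      alphaCFMap x = (ε:ℝ) / x - k ∧
      Irrational (alphaCFMap x) ∧ alphaCFMap x ∈ Set.Icc (gr - 2) (gr - 1) ∧
      x = (ε:ℝ) / (alphaCFMap x + k) := by
  classical
  have hx0 : x ≠ 0 := hx.ne_zero
  have hgl := gr_lb; have hgu := gr_ub; have hgs := gr_sq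
  obtain ⟨hxl, hxu⟩ := hm
  have hdef : alphaCFMap x = |1/x| - (⌊|1/x| + 2 - gr⌋ : ℤ) := by
    rw [alphaCFMap, if_pos ⟨hx, hxl, hxu⟩]
  set k : ℤ := ⌊|1/x| + 2 - gr⌋ with hk
  have hirr1x : Irrational (1/x) := by simpa [one_div] using hx.inv
  have hfl := Int.floor_le (|1/x| + 2 - gr)
  have hfu := Int.lt_floor_add_one (|1/x| + 2 - gr)
  rw [← hk] at hfl hfu
  have hmem' : alphaCFMap x ∈ Set.Icc (gr - 2) (gr - 1) :=
    ⟨by rw [hdef]; linarith, by rw [hdef]; linarith⟩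
  have hTirr : Irrational (alphaCFMap x) := by
    rw [hdef]
    rcases abs_cases (1/x) with ⟨h, _⟩ | ⟨h, _⟩ <;> rw [h]
    · exact hirr1x.sub_intCast k
    · exact hirr1x.neg.sub_intCast k
  rcases hx0.lt_or_gt with hneg | hpos
  · -- x < 0, ε = -1
    have habs : |1/x| = -(1/x) := abs_of_neg (one_div_neg.mpr hneg)
    have hb : (gr + 1 : ℝ) ≤ -(1/x) := by
      have hxpos : (0:ℝ) < -x := by linarith
      have : -(1/x) = 1/(-x) := by field_simp
      rw [this, le_div_iff₀ hxpos]
      nlinarith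
    have h3 : (3:ℤ) ≤ k := by
      rw [hk]
      exact Int.le_floor.mpr (by push_cast; linarith)
    have hform : alphaCFMap x = ((-1:ℤ):ℝ) / x - k := by
      rw [hdef, habs]; push_cast; ring
    refine ⟨-1, k, Or.inr rfl, by linarith, fun _ => h3, hform, hTirr, hmem', ?_⟩
    have : alphaCFMap x + k = -(1/x) := by rw [hform]; push_cast; ring
    rw [this]
    push_cast
    field_simp
  · -- x > 0, ε = 1
    have habs : |1/x| = 1/x := abs_of_pos (one_div_pos.mpr hpos)
    have hb : (gr : ℝ) ≤ 1/x := by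
      rw [le_div_iff₀ hpos]; nlinarith
    have h2 : (2:ℤ) ≤ k := by
      rw [hk]
      exact Int.le_floor.mpr (by push_cast; linarith)
    have hform : alphaCFMap x = ((1:ℤ):ℝ) / x - k := by
      rw [hdef, habs]; push_cast; ring
    refine ⟨1, k, Or.inl rfl, h2, by simp, hform, hTirr, hmem', ?_⟩
    have : alphaCFMap x + k = 1/x := by rw [hform]; push_cast; ring
    rw [this]
    push_cast
    field_simp


lemma orbit_basic {ω : ℝ} (hirr : Irrational ω) (hmem : ω ∈ Set.Icc (gr - 2) (gr - 1)) :
    ∀ n, Irrational (alphaCFMap^[n] ω) ∧ alphaCFMap^[n] ω ∈ Set.Icc (gr - 2) (gr - 1) := by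
  intro n
  induction n with
  | zero => exact ⟨hirr, hmem⟩
  | succ n ih =>
    rw [Function.iterate_succ_apply']
    obtain ⟨ε, k, _, _, _, _, h5, h6, _⟩ := Tstep ih.1 ih.2
    exact ⟨h5, h6⟩

lemma mobius_step {A B C D ε k : ℤ} {t : ℝ} (h1 : (C:ℝ)*t + D ≠ 0) :
    ((ε*A + k*C : ℤ):ℝ)*t + ((ε*B + k*D : ℤ):ℝ) =
      ((C:ℝ)*t+D) * ((k:ℝ) + ε * (((A:ℝ)*t+B)/((C:ℝ)*t+D))) ∧
    ((C:ℝ)*t+D)/(((ε*A + k*C : ℤ):ℝ)*t + ((ε*B + k*D : ℤ):ℝ)) =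
      1 / ((k:ℝ) + ε * (((A:ℝ)*t+B)/((C:ℝ)*t+D))) := by
  have e : ((ε*A + k*C : ℤ):ℝ)*t + ((ε*B + k*D : ℤ):ℝ) =
      ((C:ℝ)*t+D) * ((k:ℝ) + ε * (((A:ℝ)*t+B)/((C:ℝ)*t+D))) := by
    push_cast; field_simp; ring
  exact ⟨e, by rw [e, div_mul_cancel_left₀ h1, one_div]⟩

lemma matrix_chain {ω : ℝ} (hirr : Irrational ω) (hmem : ω ∈ Set.Icc (gr - 2) (gr - 1)) :
    ∀ n, ∃ A B C D : ℤ,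
      (∀ y ∈ Set.Icc (0:ℝ) (1/2), 0 < (C:ℝ)*y + D ∧
          ((A:ℝ)*y+B)/((C:ℝ)*y+D) ∈ Set.Icc (0:ℝ) (1/2)) ∧
      (∀ y ∈ Set.Icc (0:ℝ) (1/2), ∀ z ∈ Set.Icc (0:ℝ) (1/2),
          |((A:ℝ)*y+B)/((C:ℝ)*y+D) - ((A:ℝ)*z+B)/((C:ℝ)*z+D)| ≤ (1/2)^n * |y - z|) ∧
      ((C:ℝ)*(-1/ω) + D ≠ 0 ∧
          ((A:ℝ)*(-1/ω)+B)/((C:ℝ)*(-1/ω)+D) = -1/(alphaCFMap^[n] ω)) := by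
  intro n
  induction n with
  | zero =>
    refine ⟨1, 0, 0, 1, ?_, ?_, ?_, ?_⟩
    · intro y hy; simpa using hy
    · intro y _ z _; simp
    · norm_num
    · simp
  | succ n ih =>
    obtain ⟨A, B, C, D, hY, hL, hden, hval⟩ := ih
    obtain ⟨hxirr, hxmem⟩ := orbit_basic hirr hmem n
    obtain ⟨ε, k, hε, hk2, hk3, hform, hirr', _, _⟩ := Tstep hxirr hxmem
    set x := alphaCFMap^[n] ω with hxdef
    have hxsucc : alphaCFMap^[n+1] ω = alphaCFMap x := by
      rw [Function.iterate_succ_apply']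
    have habs1 : |(ε:ℝ)| = 1 := by rcases hε with h | h <;> subst h <;> simp
    -- uniform lower bound on new denominators over Icc
    have hkey : ∀ y ∈ Set.Icc (0:ℝ) (1/2),
        (2:ℝ) ≤ (k:ℝ) + ε * (((A:ℝ)*y+B)/((C:ℝ)*y+D)) := by
      intro y hy
      obtain ⟨h1, h2⟩ := (hY y hy).2
      rcases hε with h | h <;> subst h <;> push_cast
      · have : (2:ℝ) ≤ (k:ℝ) := by exact_mod_cast hk2
        nlinarith
      · have : (3:ℝ) ≤ (k:ℝ) := by exact_mod_cast hk3 rfl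
        nlinarith
    refine ⟨C, D, ε*A + k*C, ε*B + k*D, ?_, ?_, ?_, ?_⟩
    · -- maps Icc into Icc
      intro y hy
      have hdpos := (hY y hy).1
      obtain ⟨e, v⟩ := mobius_step (A := A) (B := B) (ε := ε) (k := k) hdpos.ne'
      have hk := hkey y hy
      constructor
      · rw [e]; positivity
      · rw [v]
        constructor
        · positivity
        · rw [div_le_div_iff₀ (by linarith) (by norm_num)]; linarith
    · -- Lipschitz
      intro y hy z hz
      have hdy := (hY y hy).1
      have hdz := (hY z hz).1
      obtain ⟨_, vy⟩ := mobius_step (A := A) (B := B) (ε := ε) (k := k) hdy.ne'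
      obtain ⟨_, vz⟩ := mobius_step (A := A) (B := B) (ε := ε) (k := k) hdz.ne'
      rw [vy, vz]
      set fy := ((A:ℝ)*y+B)/((C:ℝ)*y+D) with hfy
      set fz := ((A:ℝ)*z+B)/((C:ℝ)*z+D) with hfz
      have hky := hkey y hy
      have hkz := hkey z hz
      have hsub : 1/((k:ℝ) + ε*fy) - 1/((k:ℝ) + ε*fz) =
          (ε*(fz - fy))/(((k:ℝ) + ε*fy)*((k:ℝ) + ε*fz)) := by
        have hy0 : (k:ℝ) + ε*fy ≠ 0 := by rw [hfy]; linarith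
        have hz0 : (k:ℝ) + ε*fz ≠ 0 := by rw [hfz]; linarith
        rw [div_sub_div _ _ hy0 hz0]
        ring
      rw [hsub, abs_div, abs_mul, habs1, one_mul]
      have h4 : (4:ℝ) ≤ |((k:ℝ) + ε*fy)*((k:ℝ) + ε*fz)| := by
        rw [abs_of_pos (by nlinarith)]; nlinarith
      have hLyz : |fz - fy| ≤ (1/2)^n * |y - z| := by
        rw [abs_sub_comm]
        exact hL y hy z hz
      have hb : (0:ℝ) ≤ (1/2)^n * |y - z| := by positivity
      calc |fz - fy| / |((k:ℝ) + ε*fy)*((k:ℝ) + ε*fz)|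
          ≤ ((1/2)^n * |y - z|) / 4 := by
            apply div_le_div₀ hb hLyz (by norm_num) h4
        _ ≤ (1/2)^(n+1) * |y - z| := by rw [pow_succ]; nlinarith
    · -- u-chain denominator
      obtain ⟨e, _⟩ := mobius_step (A := A) (B := B) (ε := ε) (k := k) hden
      rw [e, hval]
      have hxne : x ≠ 0 := hxirr.ne_zero
      have e2 : (k:ℝ) + (ε:ℝ) * (-1/x) = -(alphaCFMap x) := by
        rw [hform]; field_simp; ring
      rw [e2]
      exact mul_ne_zero hden (neg_ne_zero.mpr hirr'.ne_zero)
    · -- u-chain value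
      obtain ⟨_, v⟩ := mobius_step (A := A) (B := B) (ε := ε) (k := k) hden
      rw [v, hval]
      have hxne : x ≠ 0 := hxirr.ne_zero
      have e2 : (k:ℝ) + (ε:ℝ) * (-1/x) = -(alphaCFMap x) := by
        rw [hform]; field_simp; ring
      rw [e2, hxsucc, div_neg, neg_div]


lemma inv_neg_root {p q r : ℤ} {w : ℝ} (hw : w ≠ 0) (h : (p:ℝ)*w^2 + q*w + r = 0) :
    (r:ℝ)*(-1/w)^2 - (q:ℝ)*(-1/w) + (p:ℝ) = 0 := by
  field_simp
  linear_combination h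

lemma conj_root {p q r : ℤ} {w : ℝ} (hp : (p:ℝ) ≠ 0) (h : (p:ℝ)*w^2 + q*w + r = 0) :
    (p:ℝ)*(-(q:ℝ)/p - w)^2 + (q:ℝ)*(-(q:ℝ)/p - w) + (r:ℝ) = 0 := by
  field_simp
  linear_combination (p:ℝ) * h

lemma forward {ω : ℝ} (hmem : ω ∈ Set.Icc (gr - 2) (gr - 1)) (hirr : Irrational ω)
    {a b c : ℤ} (ha : a ≠ 0) (hroot : (a : ℝ) * ω ^ 2 + (b : ℝ) * ω + (c : ℝ) = 0)
    {p : ℕ} (hp : 1 ≤ p) (hper : alphaCFMap^[p] ω = ω) :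
    -(b : ℝ) / (a : ℝ) - ω ≤ -2 := by
  have hgl := gr_lb; have hgu := gr_ub; have hgs := gr_sq
  have hω0 : ω ≠ 0 := hirr.ne_zero
  have har : (a:ℝ) ≠ 0 := Int.cast_ne_zero.mpr ha
  obtain ⟨A, B, C, D, hY, hL, hden, hval⟩ := matrix_chain hirr hmem p
  rw [hper] at hval
  obtain ⟨u, hu⟩ : ∃ u : ℝ, u = -1/ω := ⟨_, rfl⟩
  rw [← hu] at hden hval
  have hu_irr : Irrational u := by
    rw [hu, neg_div]
    simpa [one_div] using hirr.inv.neg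
  rw [div_eq_iff hden] at hval
  have hQu : (C:ℝ)*u^2 + ((D:ℝ)-(A:ℝ))*u - (B:ℝ) = 0 := by linear_combination -hval
  have hSu : (c:ℝ)*u^2 - (b:ℝ)*u + (a:ℝ) = 0 := by
    rw [hu]; exact inv_neg_root hω0 hroot
  have hc : c ≠ 0 := by
    intro hc0
    subst hc0
    have h2 : ω * ((a:ℝ)*ω + b) = 0 := by push_cast at hroot ⊢; linear_combination hroot
    rcases mul_eq_zero.mp h2 with h | h
    · exact hω0 h
    · exact ha (irr_linear hirr h).1
  have hcr : (c:ℝ) ≠ 0 := Int.cast_ne_zero.mpr hc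
  -- the conjugate ω' = -(b)/a - ω
  have hω'irr : Irrational (-(b:ℝ)/(a:ℝ) - ω) := by
    have h1 := Irrational.ratCast_sub (q := (-b : ℚ)/(a:ℚ)) hirr
    have e : ((((-b : ℚ)/(a:ℚ)) : ℚ) : ℝ) = -(b:ℝ)/(a:ℝ) := by push_cast; ring
    rw [e] at h1
    exact h1
  have hω'0 : (-(b:ℝ)/(a:ℝ) - ω) ≠ 0 := hω'irr.ne_zero
  have hRω' : (a:ℝ)*(-(b:ℝ)/(a:ℝ) - ω)^2 + (b:ℝ)*(-(b:ℝ)/(a:ℝ) - ω) + (c:ℝ) = 0 :=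
    conj_root har hroot
  obtain ⟨β, hβdef⟩ : ∃ β : ℝ, β = -1/(-(b:ℝ)/(a:ℝ) - ω) := ⟨_, rfl⟩
  have hSβ : (c:ℝ)*β^2 - (b:ℝ)*β + (a:ℝ) = 0 := by
    rw [hβdef]; exact inv_neg_root hω'0 hRω'
  -- shared-root relations
  have hlin : ((c*(D-A) + C*b : ℤ):ℝ) * u + ((-(c*B) - C*a : ℤ):ℝ) = 0 := by
    push_cast
    linear_combination (c:ℝ)*hQu - (C:ℝ)*hSu
  obtain ⟨r1, r2⟩ := irr_linear hu_irr hlin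
  have hr1 : (c:ℝ)*((D:ℝ)-(A:ℝ)) + (C:ℝ)*(b:ℝ) = 0 := by exact_mod_cast r1
  have hr2 : -((c:ℝ)*(B:ℝ)) - (C:ℝ)*(a:ℝ) = 0 := by exact_mod_cast r2
  have hQβ : (C:ℝ)*β^2 + ((D:ℝ)-(A:ℝ))*β - (B:ℝ) = 0 := by
    have h0 : (c:ℝ) * ((C:ℝ)*β^2 + ((D:ℝ)-(A:ℝ))*β - (B:ℝ)) = 0 := by
      linear_combination (C:ℝ)*hSβ + β*hr1 + hr2
    exact (mul_eq_zero.mp h0).resolve_left hcr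
  -- fixed point in [0,1/2] by IVT
  have h0m : (0:ℝ) ∈ Set.Icc (0:ℝ) (1/2) := by norm_num
  have hhm : (1/2:ℝ) ∈ Set.Icc (0:ℝ) (1/2) := by norm_num
  have hcont : ContinuousOn (fun y => ((A:ℝ)*y+B)/((C:ℝ)*y+D) - y) (Set.Icc (0:ℝ) (1/2)) := by
    apply ContinuousOn.sub _ continuousOn_id
    exact ContinuousOn.div (by fun_prop) (by fun_prop) (fun y hy => ((hY y hy).1).ne')
  have hIVT := intermediate_value_Icc' (by norm_num : (0:ℝ) ≤ 1/2) hcont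
  have h0img : (0:ℝ) ∈ Set.Icc (((A:ℝ)*(1/2)+B)/((C:ℝ)*(1/2)+D) - 1/2)
      (((A:ℝ)*0+B)/((C:ℝ)*0+D) - 0) := by
    constructor
    · have := (hY _ hhm).2.2; linarith
    · have := (hY _ h0m).2.1; linarith
  obtain ⟨t, ht, hgt⟩ := hIVT h0img
  have hfix : ((A:ℝ)*t+B)/((C:ℝ)*t+D) = t := by
    have h1 : ((A:ℝ)*t+B)/((C:ℝ)*t+D) - t = 0 := hgt
    linarith
  rw [div_eq_iff ((hY t ht).1).ne'] at hfix
  have hQt : (C:ℝ)*t^2 + ((D:ℝ)-(A:ℝ))*t - (B:ℝ) = 0 := by linear_combination -hfix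
  -- C ≠ 0
  have hC : C ≠ 0 := by
    intro hC0
    have hCr0 : (C:ℝ) = 0 := by exact_mod_cast hC0
    have hlu : ((D - A : ℤ):ℝ)*u + ((-B : ℤ):ℝ) = 0 := by
      push_cast
      linear_combination hQu - u^2 * hCr0
    obtain ⟨s1, s2⟩ := irr_linear hu_irr hlu
    have hDAr : (D:ℝ) = (A:ℝ) := by exact_mod_cast (by omega : D = A)
    have hBr : (B:ℝ) = 0 := by exact_mod_cast (by omega : B = 0)
    have hDpos := (hY 0 h0m).1
    rw [hCr0, hDAr] at hDpos
    have hApos : (0:ℝ) < (A:ℝ) := by simpa using hDpos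
    have hid : ∀ y : ℝ, ((A:ℝ)*y+(B:ℝ))/((C:ℝ)*y+(D:ℝ)) = y := by
      intro y
      rw [hCr0, hBr, hDAr, zero_mul, zero_add, add_zero, mul_comm, mul_div_assoc,
        div_self hApos.ne', mul_one]
    have hcon := hL 0 h0m (1/2) hhm
    rw [hid 0, hid (1/2)] at hcon
    have hpow : (1/2:ℝ)^p ≤ (1/2:ℝ)^1 := pow_le_pow_of_le_one (by norm_num) (by norm_num) hp
    rw [pow_one] at hpow
    rw [show |(0:ℝ) - 1/2| = 1/2 by rw [abs_of_nonpos] <;> norm_num] at hcon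
    nlinarith
  have hCr : (C:ℝ) ≠ 0 := Int.cast_ne_zero.mpr hC
  -- distinctness
  have hωω' : ω ≠ -(b:ℝ)/(a:ℝ) - ω := by
    intro h
    have h2 : ((2*a : ℤ):ℝ) * ω + ((b : ℤ):ℝ) = 0 := by
      push_cast
      have h' := h
      field_simp at h'
      linarith
    have := (irr_linear hirr h2).1
    omega
  have neg_one_div_neg_one_div : ∀ w : ℝ, w ≠ 0 → -1/(-1/w) = w := by
    intro w hw; field_simp
  have huβ : u ≠ β := by
    intro h
    apply hωω'
    have e1 : -1/u = ω := by rw [hu]; exact neg_one_div_neg_one_div ω hω0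
    have e2 : -1/β = -(b:ℝ)/(a:ℝ) - ω := by
      rw [hβdef]; exact neg_one_div_neg_one_div _ hω'0
    rw [← e2, ← e1, h]
  have hut : u ≠ t := by
    intro h
    obtain ⟨ht0, ht1⟩ := ht
    obtain ⟨hm1, hm2⟩ := hmem
    rcases hω0.lt_or_gt with hneg | hpos
    · have h2 : (0:ℝ) < -ω := by linarith
      have h5 : gr + 1 ≤ 1/(-ω) := by
        rw [le_div_iff₀ h2]
        have h7 : (gr+1) * (-ω) ≤ (gr+1) * (2-gr) :=
          mul_le_mul_of_nonneg_left (by linarith) (by linarith)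
        have h8 : (gr+1)*(2-gr) = 1 := by linear_combination -hgs
        linarith
      have h6 : u = 1/(-ω) := by rw [hu, neg_div, div_neg]
      rw [← h6, h] at h5
      linarith
    · have hlt : u < 0 := by
        rw [hu, neg_div]
        have : 0 < 1/ω := by positivity
        linarith
      rw [h] at hlt; linarith
  -- at most two roots
  have e1 : (u - β) * ((C:ℝ)*(u+β) + ((D:ℝ)-(A:ℝ))) = 0 := by
    linear_combination hQu - hQβ
  have e2 : (u - t) * ((C:ℝ)*(u+t) + ((D:ℝ)-(A:ℝ))) = 0 := by
    linear_combination hQu - hQt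
  have f1 : (C:ℝ)*(u+β) + ((D:ℝ)-(A:ℝ)) = 0 :=
    (mul_eq_zero.mp e1).resolve_left (sub_ne_zero.mpr huβ)
  have f2 : (C:ℝ)*(u+t) + ((D:ℝ)-(A:ℝ)) = 0 :=
    (mul_eq_zero.mp e2).resolve_left (sub_ne_zero.mpr hut)
  have hβt : β = t := by
    have h3 : (C:ℝ)*(β - t) = 0 := by linear_combination f1 - f2
    have h4 := (mul_eq_zero.mp h3).resolve_left hCr
    linarith [sub_eq_zero.mp h4]
  -- conclude
  have hβ0 : β ≠ 0 := by
    rw [hβdef]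
    simp [hω'0]
  have hβpos : 0 < β := lt_of_le_of_ne (hβt ▸ ht.1) (Ne.symm hβ0)
  have hβle : β ≤ 1/2 := hβt ▸ ht.2
  have hprod : (-(b:ℝ)/(a:ℝ) - ω) * β = -1 := by
    rw [hβdef, mul_comm]
    exact div_mul_cancel₀ (-1) hω'0
  nlinarith [hprod, hβpos, hβle]


lemma conj_irr {x : ℝ} (hx : Irrational x) (p q : ℤ) : Irrational (-(p:ℝ)/(q:ℝ) - x) := by
  have h1 := Irrational.ratCast_sub (q := (-p : ℚ)/(q:ℚ)) hx
  have e : ((((-p : ℚ)/(q:ℚ)) : ℚ) : ℝ) = -(p:ℝ)/(q:ℝ) := by push_cast; ring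
  rwa [e] at h1

def Good (Dd : ℤ) (x : ℝ) (A B C : ℤ) : Prop :=
  Irrational x ∧ x ∈ Set.Icc (gr-2) (gr-1) ∧ A ≠ 0 ∧
  (A:ℝ)*x^2 + (B:ℝ)*x + (C:ℝ) = 0 ∧ B^2 - 4*A*C = Dd ∧ -(B:ℝ)/(A:ℝ) - x ≤ -2

lemma conj_unique {x : ℝ} (hx : Irrational x) {a1 b1 c1 a2 b2 c2 : ℤ}
    (h1 : (a1:ℝ)*x^2 + (b1:ℝ)*x + (c1:ℝ) = 0) (h2 : (a2:ℝ)*x^2 + (b2:ℝ)*x + (c2:ℝ) = 0)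
    (ha1 : a1 ≠ 0) (ha2 : a2 ≠ 0) :
    -(b1:ℝ)/(a1:ℝ) - x = -(b2:ℝ)/(a2:ℝ) - x := by
  have hlin : ((a2*b1 - a1*b2 : ℤ):ℝ)*x + ((a2*c1 - a1*c2 : ℤ):ℝ) = 0 := by
    push_cast
    linear_combination (a2:ℝ)*h1 - (a1:ℝ)*h2
  obtain ⟨r1, _⟩ := irr_linear hx hlin
  have hr : (a2:ℝ)*(b1:ℝ) = (a1:ℝ)*(b2:ℝ) := by
    have : a2*b1 = a1*b2 := by omega
    exact_mod_cast this
  have ha1r : (a1:ℝ) ≠ 0 := Int.cast_ne_zero.mpr ha1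
  have ha2r : (a2:ℝ) ≠ 0 := Int.cast_ne_zero.mpr ha2
  field_simp
  linear_combination -hr

lemma good_step {Dd : ℤ} {x : ℝ} {A B C : ℤ} (h : Good Dd x A B C) :
    ∃ ε k A' B' C' : ℤ, (ε = 1 ∨ ε = -1) ∧ 2 ≤ k ∧
      x = (ε:ℝ)/(alphaCFMap x + k) ∧
      Good Dd (alphaCFMap x) A' B' C' ∧
      -(B':ℝ)/(A':ℝ) - alphaCFMap x = (ε:ℝ)/(-(B:ℝ)/(A:ℝ) - x) - k := by
  obtain ⟨hxirr, hxmem, hA, hroot, hdisc, hconj⟩ := h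
  obtain ⟨ε, k, hε, hk2, hk3, hform, hirr', hmem', hrec⟩ := Tstep hxirr hxmem
  have hx0 : x ≠ 0 := hxirr.ne_zero
  have hAr : (A:ℝ) ≠ 0 := Int.cast_ne_zero.mpr hA
  -- C ≠ 0
  have hC : C ≠ 0 := by
    intro hC0
    have hCr : (C:ℝ) = 0 := by exact_mod_cast hC0
    have h2 : x * ((A:ℝ)*x + B) = 0 := by linear_combination hroot - hCr
    rcases mul_eq_zero.mp h2 with h | h
    · exact hx0 h
    · exact hA (irr_linear hxirr h).1
  have hCr : (C:ℝ) ≠ 0 := Int.cast_ne_zero.mpr hC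
  -- the conjugate x'
  obtain ⟨x', hx'⟩ : ∃ t : ℝ, t = -(B:ℝ)/(A:ℝ) - x := ⟨_, rfl⟩
  have hx'irr : Irrational x' := by rw [hx']; exact conj_irr hxirr B A
  have hx'0 : x' ≠ 0 := hx'irr.ne_zero
  have hx'le : x' ≤ -2 := by rw [hx']; exact hconj
  have hsumA : (A:ℝ)*(x + x') = -(B:ℝ) := by rw [hx']; field_simp; ring
  have hprodA : (A:ℝ)*(x*x') = (C:ℝ) := by
    rw [hx']; field_simp; linear_combination -hroot
  have hrel : (C:ℝ)*(x+x') + (B:ℝ)*(x*x') = 0 := by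
    linear_combination (x*x')*hsumA - (x+x')*hprodA
  refine ⟨ε, k, C, 2*C*k + B*ε, A + B*ε*k + C*k^2, hε, hk2, hrec, ⟨hirr', hmem', hC, ?_, ?_, ?_⟩, ?_⟩
  · -- new root equation
    rw [hform]
    rcases hε with rfl | rfl <;> push_cast <;> field_simp <;> ring_nf <;>
      nlinarith [hroot, sq_nonneg x]
  · -- discriminant preserved
    rw [← hdisc]
    rcases hε with rfl | rfl <;> ring
  · -- reducedness of image
    have hcf : -((2*C*k + B*ε : ℤ):ℝ)/((C:ℤ):ℝ) - alphaCFMap x = (ε:ℝ)/x' - k := by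
      rw [hform]
      rcases hε with rfl | rfl
      · push_cast; field_simp; linear_combination -hrel
      · push_cast; field_simp; linear_combination hrel
    rw [hcf]
    rcases hε with rfl | rfl
    · have : (1:ℝ)/x' < 0 := div_neg_of_pos_of_neg one_pos (by linarith)
      have hk2r : (2:ℝ) ≤ (k:ℝ) := by exact_mod_cast hk2
      push_cast
      linarith
    · have hk3' : (3:ℝ) ≤ (k:ℝ) := by exact_mod_cast hk3 rfl
      have h1 : (1:ℝ)/(-x') ≤ 1/2 := by
        apply one_div_le_one_div_of_le (by norm_num)
        linarith
      have h2 : (-1:ℝ)/x' = 1/(-x') := by rw [div_neg, neg_div]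
      push_cast
      rw [h2]
      linarith
  · -- conjugate transformation formula
    rw [← hx']
    rw [hform]
    rcases hε with rfl | rfl
    · push_cast; field_simp; linear_combination -hrel
    · push_cast; field_simp; linear_combination hrel


lemma conj_bounds {ε : ℤ} (hε : ε = 1 ∨ ε = -1) {t : ℝ} (ht : t < -2) :
    -1/2 < (ε:ℝ)/t ∧ (ε:ℝ)/t < 1/2 ∧
    (ε = 1 → (ε:ℝ)/t < 0) ∧ (ε = -1 → 0 < (ε:ℝ)/t) := by
  have ht0 : t ≠ 0 := by linarith
  have e : 1/t * t = 1 := div_mul_cancel₀ 1 ht0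
  have h1 : 1/t < 0 := div_neg_of_pos_of_neg one_pos (by linarith)
  have h2 : -1/2 < 1/t := by nlinarith [e, ht, h1]
  rcases hε with rfl | rfl
  · push_cast
    exact ⟨h2, by linarith, fun _ => h1, by simp⟩
  · push_cast
    have e3 : (-1:ℝ)/t = -(1/t) := by rw [neg_div]
    rw [e3]
    exact ⟨by linarith, by linarith, by simp, fun _ => by linarith⟩

lemma good_conj_lt {Dd : ℤ} {x : ℝ} {A B C : ℤ} (h : Good Dd x A B C) :
    -(B:ℝ)/(A:ℝ) - x < -2 := by
  obtain ⟨hirr, _, _, _, _, hle⟩ := h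
  have hi : Irrational (-(B:ℝ)/(A:ℝ) - x) := conj_irr hirr B A
  have hne : -(B:ℝ)/(A:ℝ) - x ≠ -2 := by
    have := hi.ne_int (-2)
    intro hcon
    apply this
    rw [hcon]; push_cast; ring
  exact lt_of_le_of_ne hle hne

lemma T_inj {Dd1 Dd2 : ℤ} {x z : ℝ} {A B C A2 B2 C2 : ℤ}
    (hx : Good Dd1 x A B C) (hz : Good Dd2 z A2 B2 C2)
    (heq : alphaCFMap x = alphaCFMap z) : x = z := by
  have hxlt := good_conj_lt hx
  have hzlt := good_conj_lt hz
  obtain ⟨ε1, k1, A1', B1', C1', hε1, hk1, hrec1, hG1, hcf1⟩ := good_step hx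
  obtain ⟨ε2, k2, A2', B2', C2', hε2, hk2, hrec2, hG2, hcf2⟩ := good_step hz
  rw [← heq] at hrec2 hG2 hcf2
  obtain ⟨hwirr, _, hA1', hroot1, _, _⟩ := hG1
  obtain ⟨_, _, hA2', hroot2, _, _⟩ := hG2
  have hcu := conj_unique hwirr hroot1 hroot2 hA1' hA2'
  have hE : (ε1:ℝ)/(-(B:ℝ)/(A:ℝ) - x) - k1 = (ε2:ℝ)/(-(B2:ℝ)/(A2:ℝ) - z) - k2 := by
    rw [← hcf1, ← hcf2, hcu]
  obtain ⟨hb11, hb12, hs11, hs12⟩ := conj_bounds hε1 hxlt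
  obtain ⟨hb21, hb22, hs21, hs22⟩ := conj_bounds hε2 hzlt
  have hkeq : k1 = k2 := by
    have c1 : ((k1 - k2 : ℤ):ℝ) < 1 := by push_cast; linarith
    have c2 : (-1:ℝ) < ((k1 - k2 : ℤ):ℝ) := by push_cast; linarith
    have d1 : k1 - k2 < 1 := by exact_mod_cast c1
    have d2 : -1 < k1 - k2 := by exact_mod_cast c2
    omega
  have hveq : (ε1:ℝ)/(-(B:ℝ)/(A:ℝ) - x) = (ε2:ℝ)/(-(B2:ℝ)/(A2:ℝ) - z) := by
    have : ((k1:ℤ):ℝ) = ((k2:ℤ):ℝ) := by exact_mod_cast hkeq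
    linarith
  have heps : ε1 = ε2 := by
    rcases hε1 with rfl | rfl <;> rcases hε2 with rfl | rfl
    · rfl
    · exfalso; have := hs11 rfl; have := hs22 rfl; linarith
    · exfalso; have := hs12 rfl; have := hs21 rfl; linarith
    · rfl
  rw [hrec1, hrec2, hkeq, heps]

lemma good_bounds {Dd : ℤ} {x : ℝ} {A B C : ℤ} (h : Good Dd x A B C) :
    |A| ≤ 3*Dd ∧ |B| ≤ 3*Dd ∧ |C| ≤ 3*Dd ∧ 1 ≤ Dd := by
  have hgl := gr_lb; have hgu := gr_ub
  obtain ⟨hirr, hmem, hA, hroot, hdisc, hconj⟩ := h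
  obtain ⟨hm1, hm2⟩ := hmem
  have hx0 : x ≠ 0 := hirr.ne_zero
  have hAr : (A:ℝ) ≠ 0 := Int.cast_ne_zero.mpr hA
  obtain ⟨x', hx'⟩ : ∃ t : ℝ, t = -(B:ℝ)/(A:ℝ) - x := ⟨_, rfl⟩
  have hx'le : x' ≤ -2 := by rw [hx']; exact hconj
  have hd : (1.6:ℝ) ≤ x - x' := by linarith
  have hsumA : (A:ℝ)*(x + x') = -(B:ℝ) := by rw [hx']; field_simp; ring
  have hprodA : (A:ℝ)*(x*x') = (C:ℝ) := by
    rw [hx']; field_simp; linear_combination -hroot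
  have hE : 2*(A:ℝ)*x + (B:ℝ) = (A:ℝ)*(x - x') := by rw [hx']; field_simp; ring
  have hEsq : (2*(A:ℝ)*x + (B:ℝ))^2 = ((Dd:ℤ):ℝ) := by
    rw [← hdisc]; push_cast; linear_combination 4*(A:ℝ)*hroot
  have hEsq' : ((A:ℝ)*(x-x'))^2 = ((Dd:ℤ):ℝ) := by rw [← hE]; exact hEsq
  have hA1 : (1:ℝ) ≤ |(A:ℝ)| := by
    have h1 : (1:ℤ) ≤ |A| := Int.one_le_abs hA
    calc (1:ℝ) = ((1:ℤ):ℝ) := by norm_num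
      _ ≤ ((|A|:ℤ):ℝ) := by exact_mod_cast h1
      _ = |(A:ℝ)| := by push_cast; ring
  have hA2 : (1:ℝ) ≤ (A:ℝ)^2 := by nlinarith [hA1, sq_abs (A:ℝ)]
  have hDd : ((Dd:ℤ):ℝ) = (A:ℝ)^2*(x-x')^2 := by rw [← hEsq']; ring
  have hDge : (2.56:ℝ) ≤ ((Dd:ℤ):ℝ) := by nlinarith [hA2, hd, hDd]
  have hD1 : 1 ≤ Dd := by exact_mod_cast (by linarith : (1:ℝ) ≤ ((Dd:ℤ):ℝ))
  -- |A| ≤ Dd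
  have hd2 : (2.56:ℝ) ≤ (x-x')^2 := by nlinarith [hd]
  have hAsq : (A:ℝ)^2 ≤ ((Dd:ℤ):ℝ) := by nlinarith [hDd, hA2, hd2, sq_nonneg (A:ℝ)]
  have hAabs : |(A:ℝ)| ≤ ((Dd:ℤ):ℝ) := by nlinarith [hA1, sq_abs (A:ℝ), hAsq]
  -- |A(x-x')| ≤ Dd
  have hAxx' : |(A:ℝ)*(x-x')| ≤ ((Dd:ℤ):ℝ) := by
    nlinarith [sq_abs ((A:ℝ)*(x-x')), abs_nonneg ((A:ℝ)*(x-x')), hEsq', hDge]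
  have hxabs : |x| ≤ 1 := abs_le.mpr ⟨by linarith, by linarith⟩
  have hAx : |(A:ℝ)*x| ≤ ((Dd:ℤ):ℝ) := by
    rw [abs_mul]
    nlinarith [hAabs, hxabs, abs_nonneg (A:ℝ), abs_nonneg x]
  have hAx' : |(A:ℝ)*x'| ≤ 2*((Dd:ℤ):ℝ) := by
    have e : (A:ℝ)*x' = (A:ℝ)*x - (A:ℝ)*(x-x') := by ring
    rw [e, sub_eq_add_neg]
    calc |(A:ℝ)*x + -((A:ℝ)*(x-x'))| ≤ |(A:ℝ)*x| + |-((A:ℝ)*(x-x'))| := abs_add_le _ _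
      _ = |(A:ℝ)*x| + |(A:ℝ)*(x-x')| := by rw [abs_neg]
      _ ≤ 2*((Dd:ℤ):ℝ) := by linarith
  have hBabs : |(B:ℝ)| ≤ 3*((Dd:ℤ):ℝ) := by
    have e : (B:ℝ) = -((A:ℝ)*x + (A:ℝ)*x') := by linear_combination hsumA
    rw [e, abs_neg]
    calc |(A:ℝ)*x + (A:ℝ)*x'| ≤ |(A:ℝ)*x| + |(A:ℝ)*x'| := abs_add_le _ _
      _ ≤ 3*((Dd:ℤ):ℝ) := by linarith
  have hCabs : |(C:ℝ)| ≤ 3*((Dd:ℤ):ℝ) := by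
    have e : (C:ℝ) = x * ((A:ℝ)*x') := by rw [← hprodA]; ring
    rw [e, abs_mul]
    nlinarith [hxabs, hAx', abs_nonneg x, abs_nonneg ((A:ℝ)*x')]
  refine ⟨?_, ?_, ?_, hD1⟩
  · exact_mod_cast (by push_cast; linarith : ((|A|:ℤ):ℝ) ≤ ((3*Dd : ℤ):ℝ))
  · exact_mod_cast (by push_cast; linarith : ((|B|:ℤ):ℝ) ≤ ((3*Dd : ℤ):ℝ))
  · exact_mod_cast (by push_cast; linarith : ((|C|:ℤ):ℝ) ≤ ((3*Dd : ℤ):ℝ))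


lemma backward {ω : ℝ} (hmem : ω ∈ Set.Icc (gr - 2) (gr - 1)) (hirr : Irrational ω)
    {a b c : ℤ} (ha : a ≠ 0) (hroot : (a : ℝ) * ω ^ 2 + (b : ℝ) * ω + (c : ℝ) = 0)
    (hconj : -(b : ℝ) / (a : ℝ) - ω ≤ -2) :
    ∃ p : ℕ, 1 ≤ p ∧ alphaCFMap^[p] ω = ω := by
  classical
  have hG : ∀ n, ∃ t : ℤ×ℤ×ℤ, Good (b^2-4*a*c) (alphaCFMap^[n] ω) t.1 t.2.1 t.2.2 := by
    intro n
    induction n with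
    | zero =>
      refine ⟨(a,b,c), ?_⟩
      simp only [Function.iterate_zero_apply]
      exact ⟨hirr, hmem, ha, hroot, rfl, hconj⟩
    | succ n ih =>
      obtain ⟨⟨A, B, C⟩, hg⟩ := ih
      obtain ⟨ε, k, A', B', C', _, _, _, hg', _⟩ := good_step hg
      exact ⟨(A', B', C'), by rw [Function.iterate_succ_apply']; exact hg'⟩
  choose F hF using hG
  set K : ℤ := 3*(b^2-4*a*c) with hK
  set box : Finset (ℤ×ℤ×ℤ) :=
    (Finset.Icc (-K) K) ×ˢ (Finset.Icc (-K) K) ×ˢ (Finset.Icc (-K) K) with hbox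
  have hmap : ∀ n ∈ Finset.range (2*box.card+1), F n ∈ box := by
    intro n _
    obtain ⟨h1, h2, h3, _⟩ := good_bounds (hF n)
    rw [abs_le] at h1 h2 h3
    rw [hbox]
    rw [Finset.mem_product, Finset.mem_product]
    refine ⟨?_, ?_, ?_⟩ <;> rw [Finset.mem_Icc] <;> constructor <;> omega
  have hcard : box.card * 2 < (Finset.range (2*box.card+1)).card := by
    rw [Finset.card_range]; omega
  obtain ⟨t, _, hfib⟩ :=
    Finset.exists_lt_card_fiber_of_mul_lt_card_of_maps_to hmap hcard
  set s : Finset ℕ := Finset.filter (fun n => F n = t) (Finset.range (2*box.card+1)) with hs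
  have hscard : 3 ≤ s.card := hfib
  have hne1 : s.Nonempty := by rw [← Finset.card_pos]; omega
  obtain ⟨i, hi⟩ := hne1
  have hne2 : (s.erase i).Nonempty := by
    rw [← Finset.card_pos, Finset.card_erase_of_mem hi]; omega
  obtain ⟨j, hj⟩ := hne2
  have hne3 : ((s.erase i).erase j).Nonempty := by
    rw [← Finset.card_pos, Finset.card_erase_of_mem hj, Finset.card_erase_of_mem hi]; omega
  obtain ⟨l, hl⟩ := hne3
  have hji : j ≠ i := Finset.ne_of_mem_erase hj
  have hlj : l ≠ j := Finset.ne_of_mem_erase hl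
  have hli : l ≠ i := Finset.ne_of_mem_erase (Finset.mem_of_mem_erase hl)
  have hjs : j ∈ s := Finset.mem_of_mem_erase hj
  have hls : l ∈ s := Finset.mem_of_mem_erase (Finset.mem_of_mem_erase hl)
  have hFi : F i = t := (Finset.mem_filter.mp hi).2
  have hFj : F j = t := (Finset.mem_filter.mp hjs).2
  have hFl : F l = t := (Finset.mem_filter.mp hls).2
  have key : ∀ n, F n = t →
      (t.1:ℝ)*(alphaCFMap^[n] ω)^2 + (t.2.1:ℝ)*(alphaCFMap^[n] ω) + (t.2.2:ℝ) = 0 := by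
    intro n h
    have hg := hF n
    rw [h] at hg
    exact hg.2.2.2.1
  have ht1 : t.1 ≠ 0 := by
    have hg := hF i
    rw [hFi] at hg
    exact hg.2.2.1
  have ht1r : (t.1:ℝ) ≠ 0 := Int.cast_ne_zero.mpr ht1
  -- two of the three orbit points coincide
  have pair : ∀ m n : ℕ, m ≠ n → alphaCFMap^[m] ω = alphaCFMap^[n] ω →
      ∃ p q : ℕ, p < q ∧ alphaCFMap^[p] ω = alphaCFMap^[q] ω := by
    intro m n hne he
    rcases lt_or_gt_of_ne hne with h | h
    · exact ⟨m, n, h, he⟩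
    · exact ⟨n, m, h, he.symm⟩
  have hex : ∃ p q : ℕ, p < q ∧ alphaCFMap^[p] ω = alphaCFMap^[q] ω := by
    by_cases e1 : alphaCFMap^[i] ω = alphaCFMap^[j] ω
    · exact pair i j (Ne.symm hji) e1
    by_cases e2 : alphaCFMap^[i] ω = alphaCFMap^[l] ω
    · exact pair i l (Ne.symm hli) e2
    by_cases e3 : alphaCFMap^[j] ω = alphaCFMap^[l] ω
    · exact pair j l (Ne.symm hlj) e3
    exfalso
    have d1 : (alphaCFMap^[i] ω - alphaCFMap^[j] ω) *
        ((t.1:ℝ)*(alphaCFMap^[i] ω + alphaCFMap^[j] ω) + (t.2.1:ℝ)) = 0 := by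
      linear_combination key i hFi - key j hFj
    have d2 : (alphaCFMap^[i] ω - alphaCFMap^[l] ω) *
        ((t.1:ℝ)*(alphaCFMap^[i] ω + alphaCFMap^[l] ω) + (t.2.1:ℝ)) = 0 := by
      linear_combination key i hFi - key l hFl
    have f1 := (mul_eq_zero.mp d1).resolve_left (sub_ne_zero.mpr e1)
    have f2 := (mul_eq_zero.mp d2).resolve_left (sub_ne_zero.mpr e2)
    have f3 : (t.1:ℝ) * (alphaCFMap^[j] ω - alphaCFMap^[l] ω) = 0 := by
      linear_combination f1 - f2
    exact e3 (by linarith [sub_eq_zero.mp ((mul_eq_zero.mp f3).resolve_left ht1r)])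
  obtain ⟨m, n, hmn, hxeq⟩ := hex
  -- back-stepping
  have back : ∀ m n : ℕ, m ≤ n → alphaCFMap^[m] ω = alphaCFMap^[n] ω →
      alphaCFMap^[n-m] ω = ω := by
    intro m
    induction m with
    | zero =>
      intro n _ h
      simp only [Function.iterate_zero_apply] at h
      rw [Nat.sub_zero]
      exact h.symm
    | succ m ih =>
      intro n hmn h
      obtain ⟨n', rfl⟩ : ∃ n', n = n'+1 := ⟨n-1, by omega⟩
      have h1 : alphaCFMap (alphaCFMap^[m] ω) = alphaCFMap (alphaCFMap^[n'] ω) := by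
        rw [Function.iterate_succ_apply', Function.iterate_succ_apply'] at h
        exact h
      have h2 := T_inj (hF m) (hF n') h1
      have := ih n' (by omega) h2
      simpa [Nat.succ_sub_succ] using this
  exact ⟨n - m, by omega, back m n hmn.le hxeq⟩

end AlphaCF

/-- A quadratic irrational `ω ∈ [τ-2, τ-1]` is purely periodic under the
`(τ-1)`-continued fraction map iff its Galois conjugate `ω' = -b/a - ω` satisfies
`ω' ≤ -2`. -/
theorem alphaCF_purely_periodic_iff
    (ω : ℝ) (hmem : ω ∈ Set.Icc (goldenRatio' - 2) (goldenRatio' - 1))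
    (hirr : Irrational ω)
    (a b c : ℤ) (ha : a ≠ 0)
    (hroot : (a : ℝ) * ω ^ 2 + (b : ℝ) * ω + (c : ℝ) = 0) :
    (∃ p : ℕ, 1 ≤ p ∧ alphaCFMap^[p] ω = ω) ↔ -(b : ℝ) / (a : ℝ) - ω ≤ -2 := by
  constructor
  · rintro ⟨p, hp, hper⟩
    exact AlphaCF.forward hmem hirr ha hroot hp hper
  · intro h
    exact AlphaCF.backward hmem hirr ha hroot h
end

section
/- Let ω ∈ (0,1) be a quadratic irrational with C^[p](ω) = ω for some integer p ≥ 1, where C is the Ceiling map C(x) = ⌈1/x⌉ − 1/x. Let R be the Rényi map R(y) = −1/y − ⌈−1/y⌉ on (−1,0). Then ψ := −1/ω' lies in (−1,0), R^[p](ψ) = ψ, and for every integer t with 0 ≤ t ≤ p one has R^[t](ψ) = −1/(C^[p−t](ω))', where (·)' denotes Galois conjugation. -/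
/-- The Ceiling map `x ↦ ⌈1/x⌉ - 1/x` on irrationals in `(0,1)`, extended by `0` elsewhere. -/
noncomputable def ceilingMap (x : ℝ) : ℝ :=
  open Classical in
  if Irrational x ∧ x ∈ Set.Ioo (0 : ℝ) 1 then ⌈1 / x⌉ - 1 / x else 0

/-- The Rényi map `y ↦ -1/y - ⌈-1/y⌉` on irrationals in `(-1,0)`, extended by `0` elsewhere. -/
noncomputable def renyiMap (y : ℝ) : ℝ :=
  open Classical in
  if Irrational y ∧ y ∈ Set.Ioo (-1 : ℝ) 0 then -1 / y - ⌈-1 / y⌉ else 0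

private lemma int_lin_zero {x : ℝ} (hx : Irrational x) {m n : ℤ}
    (h : (m : ℝ) * x + (n : ℝ) = 0) : m = 0 ∧ n = 0 := by
  rcases eq_or_ne m 0 with hm | hm
  · subst hm
    refine ⟨rfl, ?_⟩
    simp at h
    exact_mod_cast h
  · exfalso
    have hm' : (m : ℝ) ≠ 0 := Int.cast_ne_zero.mpr hm
    apply hx
    refine ⟨(-n : ℚ) / (m : ℚ), ?_⟩
    push_cast
    field_simp
    linarith

private lemma quad_prop {x : ℝ} (hx : Irrational x) {a b c a' b' c' : ℤ}
    (h : (a : ℝ) * x ^ 2 + b * x + c = 0) (h' : (a' : ℝ) * x ^ 2 + b' * x + c' = 0) :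
    a' * b = a * b' ∧ a' * c = a * c' := by
  have key : ((a' * b - a * b' : ℤ) : ℝ) * x + ((a' * c - a * c' : ℤ) : ℝ) = 0 := by
    push_cast
    linear_combination (a' : ℝ) * h - (a : ℝ) * h'
  obtain ⟨h1, h2⟩ := int_lin_zero hx key
  omega

private lemma conj_eq {x : ℝ} (hx : Irrational x) {a b c a' b' c' : ℤ}
    (ha : a ≠ 0) (ha' : a' ≠ 0)
    (h : (a : ℝ) * x ^ 2 + b * x + c = 0) (h' : (a' : ℝ) * x ^ 2 + b' * x + c' = 0) :
    -(b : ℝ) / a - x = -(b' : ℝ) / a' - x := by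
  obtain ⟨h1, -⟩ := quad_prop hx h h'
  have hb : (a' : ℝ) * b = a * b' := by exact_mod_cast h1
  have haR : (a : ℝ) ≠ 0 := Int.cast_ne_zero.mpr ha
  have haR' : (a' : ℝ) ≠ 0 := Int.cast_ne_zero.mpr ha'
  field_simp
  linarith [hb]

private lemma ceilingMap_eq {x : ℝ} (h1 : Irrational x) (h2 : x ∈ Set.Ioo (0 : ℝ) 1) :
    ceilingMap x = (⌈1 / x⌉ : ℝ) - 1 / x := by
  unfold ceilingMap
  rw [if_pos ⟨h1, h2⟩]

private lemma one_div_irr {x : ℝ} (h1 : Irrational x) : Irrational (1 / x) := by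
  rw [one_div]; exact h1.inv

private lemma ceilingMap_good {x : ℝ} (h1 : Irrational x) (h2 : x ∈ Set.Ioo (0 : ℝ) 1) :
    Irrational (ceilingMap x) ∧ ceilingMap x ∈ Set.Ioo (0 : ℝ) 1 ∧ 2 ≤ ⌈1 / x⌉ := by
  obtain ⟨hx0, hx1⟩ := h2
  have hinv : Irrational (1 / x) := one_div_irr h1
  have hlt : (1 : ℝ) < 1 / x := by rw [lt_div_iff₀ hx0]; linarith
  rw [ceilingMap_eq h1 ⟨hx0, hx1⟩]
  refine ⟨hinv.intCast_sub _, ⟨?_, ?_⟩, ?_⟩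
  · have hle := Int.le_ceil (1 / x)
    have hne : (1 / x) ≠ ((⌈1 / x⌉ : ℤ) : ℝ) := hinv.ne_int _
    have : 1 / x < (⌈1 / x⌉ : ℝ) := lt_of_le_of_ne hle hne
    linarith
  · linarith [Int.ceil_lt_add_one (1 / x)]
  · have : (1 : ℤ) < ⌈1 / x⌉ := by
      rw [Int.lt_ceil]; exact_mod_cast hlt
    omega

private lemma iter_good {ω : ℝ} (hirr : Irrational ω) (hmem : ω ∈ Set.Ioo (0 : ℝ) 1) :
    ∀ k, Irrational (ceilingMap^[k] ω) ∧ ceilingMap^[k] ω ∈ Set.Ioo (0 : ℝ) 1 := by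
  intro k
  induction k with
  | zero => exact ⟨hirr, hmem⟩
  | succ k ih =>
    rw [Function.iterate_succ_apply']
    exact ⟨(ceilingMap_good ih.1 ih.2).1, (ceilingMap_good ih.1 ih.2).2.1⟩

noncomputable def sigSeq (ω s : ℝ) : ℕ → ℝ
  | 0 => s
  | k + 1 => (⌈1 / ceilingMap^[k] ω⌉ : ℝ) - 1 / sigSeq ω s k

noncomputable def matSeq (ω : ℝ) : ℕ → ℤ × ℤ × ℤ × ℤ
  | 0 => (1, 0, 0, 1)
  | k + 1 =>
      (-(matSeq ω k).2.2.1, -(matSeq ω k).2.2.2,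
        (matSeq ω k).1 + ⌈1 / ceilingMap^[k] ω⌉ * (matSeq ω k).2.2.1,
        (matSeq ω k).2.1 + ⌈1 / ceilingMap^[k] ω⌉ * (matSeq ω k).2.2.2)

private lemma sig_spec {ω : ℝ} (hmem : ω ∈ Set.Ioo (0 : ℝ) 1) (hirr : Irrational ω)
    {a b c : ℤ} (ha : a ≠ 0) (hroot : (a : ℝ) * ω ^ 2 + b * ω + c = 0) :
    ∀ k, ∃ A B C : ℤ, A ≠ 0 ∧
      (A : ℝ) * (ceilingMap^[k] ω) ^ 2 + B * (ceilingMap^[k] ω) + C = 0 ∧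
      sigSeq ω (-(b : ℝ) / a - ω) k = -(B : ℝ) / A - ceilingMap^[k] ω := by
  intro k
  induction k with
  | zero => exact ⟨a, b, c, ha, hroot, rfl⟩
  | succ k ih =>
    obtain ⟨A, B, C, hA, hq, hs⟩ := ih
    set x := ceilingMap^[k] ω with hxdef
    obtain ⟨hxirr, hxmem⟩ := iter_good hirr hmem k
    have hx0 : x ≠ 0 := ne_of_gt hxmem.1
    have hAR : (A : ℝ) ≠ 0 := Int.cast_ne_zero.mpr hA
    set σ : ℝ := sigSeq ω (-(b : ℝ) / a - ω) k with hσdef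
    have hσirr : Irrational σ := by
      rw [hs]
      have : -(B : ℝ) / A = ((-(B : ℚ) / A : ℚ) : ℝ) := by push_cast; ring
      rw [this]
      exact hxirr.ratCast_sub _
    have hσ0 : σ ≠ 0 := by simpa using hσirr.ne_int 0
    set n : ℤ := ⌈1 / x⌉ with hndef
    have h1 : (A : ℝ) * σ = -B - A * x := by
      rw [hs]; field_simp
    have hCval : (C : ℝ) = A * x * σ := by
      linear_combination hq - x * h1
    have hCR : (C : ℝ) ≠ 0 := by
      rw [hCval]
      exact mul_ne_zero (mul_ne_zero hAR hx0) hσ0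
    have hC : C ≠ 0 := by exact_mod_cast hCR
    have hx' : ceilingMap^[k + 1] ω = (n : ℝ) - 1 / x := by
      rw [Function.iterate_succ_apply', ← hxdef, ceilingMap_eq hxirr hxmem]
    refine ⟨C, -B - 2 * C * n, A + B * n + C * n ^ 2, hC, ?_, ?_⟩
    · rw [hx']
      push_cast
      have key : (C : ℝ) * ((n : ℝ) - 1 / x) ^ 2 + (-(B : ℝ) - 2 * C * n) * ((n : ℝ) - 1 / x) +
          ((A : ℝ) + B * n + C * n ^ 2) = ((A : ℝ) * x ^ 2 + B * x + C) / x ^ 2 := by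
        field_simp
        ring
      rw [key, hq]
      simp
    · show (⌈1 / x⌉ : ℝ) - 1 / σ = _
      rw [hx', ← hndef]
      push_cast
      have hG : -1/σ - 1/x = (B:ℝ)/C := by
        rw [hCval]
        field_simp
        linear_combination -h1
      field_simp at hG ⊢
      linear_combination hG


private lemma mat_pos {ω : ℝ} (hmem : ω ∈ Set.Ioo (0 : ℝ) 1) (hirr : Irrational ω) :
    ∀ k, ∀ x ∈ Set.Icc (-1 : ℝ) 0,
      0 < ((matSeq ω k).2.2.1 : ℝ) * x + ((matSeq ω k).2.2.2 : ℝ) ∧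
      -(((matSeq ω k).2.2.1 : ℝ) * x + ((matSeq ω k).2.2.2 : ℝ)) ≤
        ((matSeq ω k).1 : ℝ) * x + ((matSeq ω k).2.1 : ℝ) ∧
      ((matSeq ω k).1 : ℝ) * x + ((matSeq ω k).2.1 : ℝ) ≤ 0 ∧
      (1 ≤ k → ((matSeq ω k).1 : ℝ) * x + ((matSeq ω k).2.1 : ℝ) < 0) := by
  intro k
  induction k with
  | zero =>
    intro x hx
    simp [matSeq]
    exact ⟨hx.1, hx.2⟩
  | succ k ih =>
    intro x hx
    obtain ⟨hd, hlb, hub, _⟩ := ih x hx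
    obtain ⟨hxirr, hxmem⟩ := iter_good hirr hmem k
    have hn : (2 : ℝ) ≤ (⌈1 / ceilingMap^[k] ω⌉ : ℝ) := by
      exact_mod_cast (ceilingMap_good hxirr hxmem).2.2
    simp only [matSeq]
    push_cast
    refine ⟨by nlinarith, by nlinarith, by nlinarith, fun _ => by nlinarith⟩

private lemma mat_theta {ω : ℝ} (hmem : ω ∈ Set.Ioo (0 : ℝ) 1) (hirr : Irrational ω) :
    ∀ k, ((matSeq ω k).2.2.1 : ℝ) * (-1 / ω) + ((matSeq ω k).2.2.2 : ℝ) ≠ 0 ∧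
      ((matSeq ω k).1 : ℝ) * (-1 / ω) + ((matSeq ω k).2.1 : ℝ) =
        (-1 / ceilingMap^[k] ω) *
          (((matSeq ω k).2.2.1 : ℝ) * (-1 / ω) + ((matSeq ω k).2.2.2 : ℝ)) := by
  intro k
  induction k with
  | zero =>
    simp [matSeq]
  | succ k ih =>
    obtain ⟨hd, hv⟩ := ih
    obtain ⟨hxirr, hxmem⟩ := iter_good hirr hmem k
    obtain ⟨hxirr', hxmem'⟩ := iter_good hirr hmem (k + 1)
    have hx0 : ceilingMap^[k] ω ≠ 0 := ne_of_gt hxmem.1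
    have hx0' : ceilingMap^[k + 1] ω ≠ 0 := ne_of_gt hxmem'.1
    have hstep : ceilingMap^[k + 1] ω = (⌈1 / ceilingMap^[k] ω⌉ : ℝ) - 1 / ceilingMap^[k] ω := by
      rw [Function.iterate_succ_apply', ceilingMap_eq hxirr hxmem]
    set x := ceilingMap^[k] ω
    set x' := ceilingMap^[k + 1] ω
    set n : ℤ := ⌈1 / x⌉
    set γ := ((matSeq ω k).2.2.1 : ℝ)
    set δ := ((matSeq ω k).2.2.2 : ℝ)
    set α := ((matSeq ω k).1 : ℝ)
    set β := ((matSeq ω k).2.1 : ℝ)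
    have hden : ((matSeq ω (k + 1)).2.2.1 : ℝ) * (-1 / ω) + ((matSeq ω (k + 1)).2.2.2 : ℝ) =
        (γ * (-1 / ω) + δ) * x' := by
      simp only [matSeq]
      push_cast
      rw [hstep]
      linear_combination hv
    constructor
    · rw [hden]
      exact mul_ne_zero hd hx0'
    · rw [hden]
      have : ((matSeq ω (k + 1)).1 : ℝ) * (-1 / ω) + ((matSeq ω (k + 1)).2.1 : ℝ) =
          -(γ * (-1 / ω) + δ) := by
        simp only [matSeq]
        push_cast
        ring
      rw [this]
      field_simp

private lemma psi_base {ω : ℝ} (hmem : ω ∈ Set.Ioo (0 : ℝ) 1) (hirr : Irrational ω)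
    {a b c : ℤ} (ha : a ≠ 0) (hroot : (a : ℝ) * ω ^ 2 + b * ω + c = 0)
    {p : ℕ} (hp : 1 ≤ p) (hper : ceilingMap^[p] ω = ω) :
    -1 / (-(b : ℝ) / a - ω) ∈ Set.Icc (-1 : ℝ) 0 := by
  have hω0 : ω ≠ 0 := ne_of_gt hmem.1
  have haR : (a : ℝ) ≠ 0 := Int.cast_ne_zero.mpr ha
  set σ₀ : ℝ := -(b : ℝ) / a - ω with hσ₀def
  set α : ℤ := (matSeq ω p).1
  set β : ℤ := (matSeq ω p).2.1
  set γ : ℤ := (matSeq ω p).2.2.1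
  set δ : ℤ := (matSeq ω p).2.2.2
  have hI1 := mat_pos hmem hirr p
  have hβneg : (β : ℝ) < 0 := by
    have h := (hI1 0 ⟨by norm_num, le_refl 0⟩).2.2.2 hp
    simpa using h
  -- IVT
  set f : ℝ → ℝ := fun x => (α : ℝ) * x + β - x * ((γ : ℝ) * x + δ) with hfdef
  have hf0 : f 0 = β := by simp [hfdef]
  have hfm1 : 0 ≤ f (-1) := by
    have h := hI1 (-1) ⟨le_refl _, by norm_num⟩
    have := h.2.1
    simp only [hfdef]
    linarith
  have hcont : ContinuousOn f (Set.Icc (-1 : ℝ) 0) := by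
    apply Continuous.continuousOn
    fun_prop
  have hsub := intermediate_value_Icc' (by norm_num : (-1 : ℝ) ≤ 0) hcont
  have h0mem : (0 : ℝ) ∈ Set.Icc (f 0) (f (-1)) := by
    rw [hf0]
    exact ⟨le_of_lt hβneg, hfm1⟩
  obtain ⟨x, hxmem, hfx⟩ := hsub h0mem
  -- θ-relation
  have hI2 := (mat_theta hmem hirr p).2
  rw [hper] at hI2
  have hq2 : (β : ℝ) * ω ^ 2 + ((δ - α : ℤ) : ℝ) * ω + ((-γ : ℤ) : ℝ) = 0 := by
    push_cast
    field_simp at hI2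
    have h3 : ω * ((β : ℝ) * ω ^ 2 + ((δ : ℝ) - α) * ω + (-(γ : ℝ))) = 0 := by
      linear_combination ω * hI2
    rcases mul_eq_zero.mp h3 with h | h
    · exact absurd h hω0
    · exact h
  have hβ : β ≠ 0 := by
    intro h
    rw [h] at hβneg
    norm_num at hβneg
  obtain ⟨h1, h2⟩ := quad_prop hirr hroot hq2
  have h1r : (β : ℝ) * b = a * (δ - α) := by exact_mod_cast h1
  have h2r : (β : ℝ) * c = a * (-γ) := by exact_mod_cast h2
  -- x is a root of γ x² + (δ-α) x - β
  have hx0 : x ≠ 0 := by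
    intro h
    rw [h, hf0] at hfx
    exact hβ (by exact_mod_cast hfx)
  have hxq : (γ : ℝ) * x ^ 2 + (δ - α : ℝ) * x - β = 0 := by
    simp only [hfdef] at hfx
    linear_combination -hfx
  -- y = -1/x is a root of β y² + (δ-α) y - γ
  set y : ℝ := -1 / x with hydef
  have hyq : (β : ℝ) * y ^ 2 + (δ - α : ℝ) * y - γ = 0 := by
    rw [hydef]
    field_simp
    linear_combination -hxq
  -- factorization
  have hsum : (a : ℝ) * (ω + σ₀) = -b := by
    rw [hσ₀def]
    field_simp
    ring
  have hprod : (a : ℝ) * (ω * σ₀) = c := by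
    rw [hσ₀def]
    field_simp
    linear_combination -hroot
  have hfac : (a : ℝ) * ((β : ℝ) * y ^ 2 + (δ - α : ℝ) * y - γ) =
      (a : ℝ) * (β * ((y - ω) * (y - σ₀))) := by
    push_cast
    linear_combination (-(y : ℝ)) * h1r - h2r + (β : ℝ) * y * hsum - (β : ℝ) * hprod
  rw [hyq] at hfac
  have hzero : (y - ω) * (y - σ₀) = 0 := by
    have hβR : (β : ℝ) ≠ 0 := Int.cast_ne_zero.mpr hβ
    have haβ : (a : ℝ) * (β : ℝ) ≠ 0 := mul_ne_zero haR hβR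
    have h' : (a : ℝ) * (β : ℝ) * ((y - ω) * (y - σ₀)) = 0 := by linear_combination -hfac
    exact (mul_eq_zero.mp h').resolve_left haβ
  -- y ≥ 1 hence y = σ₀
  have hxneg : x < 0 := lt_of_le_of_ne hxmem.2 hx0
  have hy1 : 1 ≤ y := by
    rw [hydef]
    rw [le_div_iff_of_neg hxneg]
    linarith [hxmem.1]
  have hyω : y ≠ ω := by
    intro h
    rw [h] at hy1
    linarith [hmem.2]
  have hyσ : y = σ₀ := by
    rcases mul_eq_zero.mp hzero with h | h
    · exact absurd (by linarith : y = ω) hyω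
    · linarith
  rw [← hyσ, hydef]
  have : -1 / (-1 / x) = x := by field_simp
  rw [this]
  exact hxmem

/-- If `ω ∈ (0,1)` is a quadratic irrational purely periodic of period `p` for the Ceiling
map `C`, then `ψ = -1/ω'` lies in `(-1,0)`, is purely periodic of period `p` for the Rényi
map `R`, and `R^[t](ψ) = -1/(C^[p-t](ω))'` for `0 ≤ t ≤ p`, where `'` is Galois
conjugation. -/
theorem ceiling_renyi_duality
    (ω : ℝ) (hmem : ω ∈ Set.Ioo (0 : ℝ) 1) (hirr : Irrational ω)
    (a b c : ℤ) (ha : a ≠ 0)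
    (hroot : (a : ℝ) * ω ^ 2 + (b : ℝ) * ω + (c : ℝ) = 0)
    (p : ℕ) (hp : 1 ≤ p) (hper : ceilingMap^[p] ω = ω) :
    -1 / (-(b : ℝ) / (a : ℝ) - ω) ∈ Set.Ioo (-1 : ℝ) 0 ∧
    renyiMap^[p] (-1 / (-(b : ℝ) / (a : ℝ) - ω)) = -1 / (-(b : ℝ) / (a : ℝ) - ω) ∧
    ∀ t : ℕ, t ≤ p →
      ∀ a' b' c' : ℤ, a' ≠ 0 →
        (a' : ℝ) * (ceilingMap^[p - t] ω) ^ 2 + (b' : ℝ) * (ceilingMap^[p - t] ω) +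
          (c' : ℝ) = 0 →
        renyiMap^[t] (-1 / (-(b : ℝ) / (a : ℝ) - ω)) =
          -1 / (-(b' : ℝ) / (a' : ℝ) - ceilingMap^[p - t] ω) := by
  have hω0 : ω ≠ 0 := ne_of_gt hmem.1
  set s₀ : ℝ := -(b : ℝ) / a - ω with hs₀def
  set σ : ℕ → ℝ := sigSeq ω s₀ with hσdef
  have hσspec := sig_spec hmem hirr ha hroot
  have hσirr : ∀ k, Irrational (σ k) := by
    intro k
    obtain ⟨A, B, C, hA, -, hs⟩ := hσspec k
    rw [hσdef, hs]
    have : -(B : ℝ) / A = ((-(B : ℚ) / A : ℚ) : ℝ) := by push_cast; ring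
    rw [this]
    exact (iter_good hirr hmem k).1.ratCast_sub _
  have hσ0 : ∀ k, σ k ≠ 0 := fun k => by simpa using (hσirr k).ne_int 0
  have hψirr : ∀ k, Irrational (-1 / σ k) := by
    intro k
    rw [neg_div, one_div]
    exact ((hσirr k).inv).neg
  -- base membership
  have hbase : -1 / σ 0 ∈ Set.Ioo (-1 : ℝ) 0 := by
    have hIcc : -1 / σ 0 ∈ Set.Icc (-1 : ℝ) 0 := psi_base hmem hirr ha hroot hp hper
    have hne1 : -1 / σ 0 ≠ -1 := by
      have := (hψirr 0).ne_int (-1)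
      simpa using this
    have hne0 : -1 / σ 0 ≠ 0 := by
      have := (hψirr 0).ne_int 0
      simpa using this
    exact ⟨lt_of_le_of_ne hIcc.1 (Ne.symm hne1), lt_of_le_of_ne hIcc.2 hne0⟩
  -- step recursion for σ
  have hσsucc : ∀ k, σ (k + 1) = (⌈1 / ceilingMap^[k] ω⌉ : ℝ) + -1 / σ k := by
    intro k
    show (⌈1 / ceilingMap^[k] ω⌉ : ℝ) - 1 / σ k = _
    ring
  have hn2 : ∀ k, (2 : ℝ) ≤ (⌈1 / ceilingMap^[k] ω⌉ : ℝ) := by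
    intro k
    exact_mod_cast (ceilingMap_good (iter_good hirr hmem k).1 (iter_good hirr hmem k).2).2.2
  -- forward membership
  have hψmem : ∀ k, -1 / σ k ∈ Set.Ioo (-1 : ℝ) 0 := by
    intro k
    induction k with
    | zero => exact hbase
    | succ k ih =>
      have hσ1 : 1 < σ (k + 1) := by
        rw [hσsucc k]
        linarith [ih.1, hn2 k]
      constructor
      · rw [neg_div, neg_lt_neg_iff, div_lt_one (by linarith)]
        exact hσ1
      · rw [neg_div, neg_lt_zero]
        positivity
  -- Renyi step
  have hR : ∀ k, renyiMap (-1 / σ (k + 1)) = -1 / σ k := by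
    intro k
    unfold renyiMap
    rw [if_pos ⟨hψirr (k + 1), hψmem (k + 1)⟩]
    have hinv : -1 / (-1 / σ (k + 1)) = σ (k + 1) := by
      field_simp
    rw [hinv, hσsucc k]
    have hceil : ⌈(⌈1 / ceilingMap^[k] ω⌉ : ℝ) + -1 / σ k⌉ = ⌈1 / ceilingMap^[k] ω⌉ := by
      rw [add_comm, Int.ceil_add_intCast]
      have : ⌈-1 / σ k⌉ = 0 := by
        rw [Int.ceil_eq_zero_iff]
        exact ⟨(hψmem k).1, le_of_lt (hψmem k).2⟩
      omega
    rw [hceil]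
    ring
  -- backward iteration
  have hRt : ∀ t, t ≤ p → renyiMap^[t] (-1 / σ p) = -1 / σ (p - t) := by
    intro t
    induction t with
    | zero => intro _; simp
    | succ t ih =>
      intro ht
      have ht' : t ≤ p := Nat.le_of_succ_le ht
      rw [Function.iterate_succ_apply', ih ht']
      have hpt : p - t = (p - (t + 1)) + 1 := by omega
      rw [hpt, hR]
  -- σ p = σ 0
  have hσp : σ p = s₀ := by
    obtain ⟨A, B, C, hA, hq, hs⟩ := hσspec p
    rw [hper] at hq hs
    show sigSeq ω (-(b : ℝ) / a - ω) p = -(b : ℝ) / a - ω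
    rw [hs]
    exact conj_eq hirr hA ha hq hroot
  have hψ0 : -1 / s₀ = -1 / σ 0 := rfl
  have h00 : σ 0 = σ p := hσp.symm
  refine ⟨hbase, ?_, ?_⟩
  · rw [hψ0, h00, hRt p le_rfl]
    rw [Nat.sub_self, h00]
  · intro t ht a' b' c' ha' hroot'
    rw [hψ0, h00, hRt t ht]
    obtain ⟨A, B, C, hA, hq, hs⟩ := hσspec (p - t)
    show -1 / sigSeq ω (-(b : ℝ) / a - ω) (p - t) = _
    rw [hs]
    congr 1
    exact conj_eq (iter_good hirr hmem (p - t)).1 hA ha' hq hroot'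
end
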